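/- arXiv:2203.03006 — 6 statements merged into one kernel-verified Lean document; each statement's English description precedes it below -/
import Mathlib

section
/- Let 0 ≤ s < r be fixed integers and let t ≥ 3 be a fixed integer. Then, as n → ∞, the number of monomorphisms from the cycle C_t to the generalized Johnson graph G(n,r,s) satisfies mon(C_t) ~ N·N1·(N1/C(r,s))^{t-2}, i.e. the ratio of the two sides tends to 1. -/
open Filter Finset SimpleGraph

/-- Number of graph homomorphisms from the cycle `C_t` to `G`. -/
noncomputable def homCount (t : ℕ) {V : Type*} [Fintype V] (G : SimpleGraph V) : ℕ :=
  Nat.card { f : Fin t → V //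
    ∀ a b, (SimpleGraph.cycleGraph t).Adj a b → G.Adj (f a) (f b) }

/-- Number of injective graph homomorphisms from the cycle `C_t` to `G`. -/
noncomputable def monCount (t : ℕ) {V : Type*} [Fintype V] (G : SimpleGraph V) : ℕ :=
  Nat.card { f : Fin t → V // Function.Injective f ∧
    ∀ a b, (SimpleGraph.cycleGraph t).Adj a b → G.Adj (f a) (f b) }

/-- The generalized Johnson graph `G(n,r,s)`. -/
def johnsonGraph (n r s : ℕ) :
    SimpleGraph {x : Finset (Fin n) // x.card = r} where
  Adj x y := x ≠ y ∧ (x.1 ∩ y.1).card = s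
  symm := ⟨fun x y ⟨hne, h⟩ => ⟨hne.symm, by rwa [Finset.inter_comm]⟩⟩
  loopless := ⟨fun x ⟨hne, _⟩ => hne rfl⟩

variable {V : Type*} [Fintype V] [DecidableEq V]

lemma card_subsets (C : Finset V) (d : ℕ) :
    Nat.card {B : Finset V // B ⊆ C ∧ B.card = d} = C.card.choose d := by
  rw [Nat.card_eq_fintype_card, Fintype.card_subtype, ← Finset.card_powersetCard]
  congr 1
  ext B
  simp [Finset.mem_powersetCard]


lemma card_disjoint_tuples (d : ℕ) (C : Finset V) :
    ∀ k : ℕ, Nat.card {A : Fin k → Finset V //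
      (∀ i, A i ⊆ C ∧ (A i).card = d) ∧ ∀ i j, i ≠ j → Disjoint (A i) (A j)} =
      ∏ i ∈ Finset.range k, (C.card - i * d).choose d := by
  intro k
  induction k with
  | zero =>
    rw [Finset.range_zero, Finset.prod_empty]
    have : Unique {A : Fin 0 → Finset V //
      (∀ i, A i ⊆ C ∧ (A i).card = d) ∧ ∀ i j, i ≠ j → Disjoint (A i) (A j)} := by
      refine ⟨⟨⟨fun i => i.elim0, fun i => i.elim0, fun i => i.elim0⟩⟩, ?_⟩
      rintro ⟨A, hA⟩
      ext i
      exact i.elim0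
    exact Nat.card_unique
  | succ k ih =>
      have e : {A : Fin (k+1) → Finset V //
          (∀ i, A i ⊆ C ∧ (A i).card = d) ∧ ∀ i j, i ≠ j → Disjoint (A i) (A j)} ≃
          Σ A' : {A : Fin k → Finset V //
            (∀ i, A i ⊆ C ∧ (A i).card = d) ∧ ∀ i j, i ≠ j → Disjoint (A i) (A j)},
            {B : Finset V // B ⊆ C \ (Finset.univ.biUnion fun i => A'.1 i) ∧ B.card = d} := by
        refine ⟨fun A => ⟨⟨fun i => A.1 i.castSucc, fun i => A.2.1 _,
            fun i j hij => A.2.2 _ _ (by simpa [Fin.ext_iff] using hij)⟩,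
            ⟨A.1 (Fin.last k), ?_, (A.2.1 _).2⟩⟩,
          fun p => ⟨Fin.snoc p.1.1 p.2.1, ?_, ?_⟩, ?_, ?_⟩
        · rw [Finset.subset_sdiff]
          refine ⟨(A.2.1 _).1, ?_⟩
          rw [Finset.disjoint_biUnion_right]
          intro i _
          exact A.2.2 _ _ (by simp [Fin.ext_iff]; exact i.isLt.ne')
        · intro i
          refine Fin.lastCases ?_ (fun j => ?_) i
          · simp only [Fin.snoc_last]
            exact ⟨(Finset.subset_sdiff.mp p.2.2.1).1, p.2.2.2⟩
          · simpa using p.1.2.1 j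
        · have hdisj : ∀ i' : Fin k, Disjoint (p.2.1 : Finset V) (p.1.1 i') := by
            intro i'
            exact (Finset.disjoint_biUnion_right _ _ _).mp
              (Finset.subset_sdiff.mp p.2.2.1).2 i' (Finset.mem_univ _)
          intro i j hij
          rcases Fin.eq_castSucc_or_eq_last i with ⟨i', rfl⟩ | rfl <;>
            rcases Fin.eq_castSucc_or_eq_last j with ⟨j', rfl⟩ | rfl
          · simp only [Fin.snoc_castSucc]
            exact p.1.2.2 _ _ (fun h => hij (by rw [h]))
          · simp only [Fin.snoc_last, Fin.snoc_castSucc]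
            exact (hdisj i').symm
          · simp only [Fin.snoc_last, Fin.snoc_castSucc]
            exact hdisj j'
          · exact absurd rfl hij
        · intro A
          ext i : 2
          exact Fin.lastCases (by simp) (fun j => by simp) i
        · rintro ⟨A', B⟩
          have h1 : (fun i : Fin k => Fin.snoc (α := fun _ => Finset V) A'.1 B.1 i.castSucc) = A'.1 :=
            funext fun i => by simp
          refine Sigma.ext (Subtype.ext h1) ?_
          refine (Subtype.heq_iff_coe_eq ?_).mpr (by simp)
          intro B'
          rw [h1]
      rw [Nat.card_congr e, Nat.card_eq_fintype_card, Fintype.card_sigma, Finset.prod_range_succ, ← ih]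
      have hfib : ∀ A' : {A : Fin k → Finset V //
            (∀ i, A i ⊆ C ∧ (A i).card = d) ∧ ∀ i j, i ≠ j → Disjoint (A i) (A j)},
          Fintype.card {B : Finset V // B ⊆ C \ (Finset.univ.biUnion fun i => A'.1 i) ∧ B.card = d}
            = (C.card - k * d).choose d := by
        intro A'
        rw [← Nat.card_eq_fintype_card, card_subsets]
        congr 1
        rw [Finset.card_sdiff_of_subset (by
          intro x hx
          simp only [Finset.mem_biUnion] at hx
          obtain ⟨i, _, hi⟩ := hx
          exact (A'.2.1 i).1 hi)]
        congr 1
        rw [Finset.card_biUnion (fun i _ j _ hij => A'.2.2 i j hij)]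
        simp [(A'.2.1 _).2, mul_comm]
      rw [Finset.sum_congr rfl (fun A' _ => hfib A'), Finset.sum_const, Finset.card_univ,
        ← Nat.card_eq_fintype_card, smul_eq_mul]

lemma cyc_adj {m : ℕ} (i : Fin (m + 3)) :
    (SimpleGraph.cycleGraph (m + 3)).Adj i (i + 1) := by
  have : ∀ (u v : Fin (m+1+2)), u - v = 1 ∨ v - u = 1 → (SimpleGraph.cycleGraph (m+1+2)).Adj u v :=
    fun u v h => SimpleGraph.cycleGraph_adj.mpr h
  exact this i (i+1) (Or.inr (add_sub_cancel_left i 1))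

lemma fin_zero_ne_one (m : ℕ) : (0 : Fin (m + 3)) ≠ 1 := by simp [Fin.ext_iff]

section
variable (r s : ℕ) (m : ℕ) (n : ℕ)

def IsMon (f : Fin (m+3) → {x : Finset (Fin n) // x.card = r}) : Prop :=
  Function.Injective f ∧ ∀ a b, (SimpleGraph.cycleGraph (m+3)).Adj a b →
    (johnsonGraph n r s).Adj (f a) (f b)

def IsCore (f : Fin (m+3) → {x : Finset (Fin n) // x.card = r}) : Prop :=
  ∃ S : Finset (Fin n), S.card = s ∧ ∀ i j, i ≠ j → (f i).1 ∩ (f j).1 = S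

end

lemma core_equiv (r s m n : ℕ) (hs : s < r) :
    Nonempty ({f : Fin (m+3) → {x : Finset (Fin n) // x.card = r} //
        IsMon r s m n f ∧ IsCore r s m n f} ≃
      Σ S : {S : Finset (Fin n) // S.card = s},
        {A : Fin (m+3) → Finset (Fin n) //
          (∀ i, A i ⊆ (S.1)ᶜ ∧ (A i).card = r - s) ∧
          ∀ i j, i ≠ j → Disjoint (A i) (A j)}) := by
  constructor
  -- facts about core monomorphisms
  have hfwd : ∀ (f : Fin (m+3) → {x : Finset (Fin n) // x.card = r}),
      IsMon r s m n f ∧ IsCore r s m n f →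
      ((f 0).1 ∩ (f 1).1).card = s ∧
      (∀ i j, i ≠ j → (f i).1 ∩ (f j).1 = (f 0).1 ∩ (f 1).1) ∧
      (∀ i, (f 0).1 ∩ (f 1).1 ⊆ (f i).1) := by
    rintro f ⟨hmon, S, hSc, hSij⟩
    have h01 : (f 0).1 ∩ (f 1).1 = S := hSij 0 1 (fin_zero_ne_one m)
    refine ⟨h01 ▸ hSc, fun i j hij => by rw [hSij i j hij, h01], fun i => ?_⟩
    have hne : i ≠ i + 1 := (cyc_adj i).ne
    rw [h01, ← hSij i (i+1) hne]
    exact Finset.inter_subset_left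
  -- facts about (S, A) pairs
  have hbwd : ∀ (S : Finset (Fin n)), S.card = s →
      ∀ (A : Fin (m+3) → Finset (Fin n)),
      ((∀ i, A i ⊆ Sᶜ ∧ (A i).card = r - s) ∧ ∀ i j, i ≠ j → Disjoint (A i) (A j)) →
      (∀ i, (S ∪ A i).card = r) ∧
      (∀ i j, i ≠ j → (S ∪ A i) ∩ (S ∪ A j) = S) ∧
      (∀ i j, i ≠ j → S ∪ A i ≠ S ∪ A j) := by
    rintro S hSc A ⟨hA1, hA2⟩
    have hdisjS : ∀ i, Disjoint S (A i) := fun i =>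
      Finset.disjoint_left.mpr fun x hx hx' => by
        have := (hA1 i).1 hx'
        simp only [Finset.mem_compl] at this
        exact this hx
    have hcard : ∀ i, (S ∪ A i).card = r := fun i => by
      rw [Finset.card_union_of_disjoint (hdisjS i), hSc, (hA1 i).2]
      omega
    have hint : ∀ i j, i ≠ j → (S ∪ A i) ∩ (S ∪ A j) = S := fun i j hij => by
      rw [← Finset.union_inter_distrib_left,
        Finset.disjoint_iff_inter_eq_empty.mp (hA2 i j hij), Finset.union_empty]
    refine ⟨hcard, hint, fun i j hij h => ?_⟩
    have hAeq : A i = A j := by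
      have h1 : A i = (S ∪ A i) \ S := by
        rw [Finset.union_sdiff_left, Finset.sdiff_eq_self_of_disjoint (hdisjS i).symm]
      have h2 : A j = (S ∪ A j) \ S := by
        rw [Finset.union_sdiff_left, Finset.sdiff_eq_self_of_disjoint (hdisjS j).symm]
      rw [h1, h2, h]
    have hAi : A i = ∅ := by
      have hd := hA2 i j hij
      rw [← hAeq] at hd
      simpa using disjoint_self.mp hd
    have h0 : r - s = 0 := by rw [← (hA1 i).2, hAi, Finset.card_empty]
    omega
  refine ⟨fun fh => ⟨⟨(fh.1 0).1 ∩ (fh.1 1).1, (hfwd fh.1 fh.2).1⟩,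
      ⟨fun i => (fh.1 i).1 \ ((fh.1 0).1 ∩ (fh.1 1).1), ?_, ?_⟩⟩,
    fun p => ⟨fun i => ⟨p.1.1 ∪ p.2.1 i, (hbwd p.1.1 p.1.2 p.2.1 p.2.2).1 i⟩, ?_, ?_⟩,
    ?_, ?_⟩
  · -- A i ⊆ Sᶜ and card
    obtain ⟨h1, h2, h3⟩ := hfwd fh.1 fh.2
    intro i
    constructor
    · intro x hx
      rw [Finset.mem_compl]
      exact (Finset.mem_sdiff.mp hx).2
    · rw [Finset.card_sdiff_of_subset (h3 i), (fh.1 i).2, h1]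
  · -- disjoint
    obtain ⟨h1, h2, h3⟩ := hfwd fh.1 fh.2
    intro i j hij
    refine Finset.disjoint_left.mpr fun x hx hx' => ?_
    rw [Finset.mem_sdiff] at hx hx'
    exact hx.2 (h2 i j hij ▸ Finset.mem_inter.mpr ⟨hx.1, hx'.1⟩)
  · -- IsMon
    obtain ⟨h1, h2, h3⟩ := hbwd p.1.1 p.1.2 p.2.1 p.2.2
    have hne : ∀ i j : Fin (m+3), i ≠ j →
        (⟨p.1.1 ∪ p.2.1 i, h1 i⟩ : {x : Finset (Fin n) // x.card = r}) ≠ ⟨p.1.1 ∪ p.2.1 j, h1 j⟩ :=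
      fun i j hij h => h3 i j hij (congrArg Subtype.val h)
    refine ⟨fun i j h => by_contra fun hij => hne i j hij h, fun a b hab => ?_⟩
    exact show _ ∧ _ from ⟨hne a b hab.ne, by rw [show ((⟨p.1.1 ∪ p.2.1 a, h1 a⟩ :
      {x : Finset (Fin n) // x.card = r})).1 ∩ (⟨p.1.1 ∪ p.2.1 b, h1 b⟩ :
      {x : Finset (Fin n) // x.card = r}).1 = p.1.1 from h2 a b hab.ne, p.1.2]⟩
  · -- IsCore
    obtain ⟨h1, h2, h3⟩ := hbwd p.1.1 p.1.2 p.2.1 p.2.2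
    exact ⟨p.1.1, p.1.2, fun i j hij => h2 i j hij⟩
  · -- left inverse
    intro fh
    obtain ⟨h1, h2, h3⟩ := hfwd fh.1 fh.2
    refine Subtype.ext (funext fun i => Subtype.ext ?_)
    simp only
    rw [Finset.union_sdiff_of_subset (h3 i)]
  · -- right inverse
    rintro ⟨S, A⟩
    obtain ⟨h1, h2, h3⟩ := hbwd S.1 S.2 A.1 A.2
    have hS' : (S.1 ∪ A.1 0) ∩ (S.1 ∪ A.1 1) = S.1 := h2 0 1 (fin_zero_ne_one m)
    refine Sigma.ext (Subtype.ext hS') ?_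
    refine (Subtype.heq_iff_coe_eq ?_).mpr (funext fun i => ?_)
    · intro A'
      dsimp only
      rw [hS']
    · dsimp only
      rw [hS', Finset.union_sdiff_left,
        Finset.sdiff_eq_self_of_disjoint]
      refine Finset.disjoint_left.mpr fun x hx hx' => ?_
      have := (A.2.1 i).1 hx
      rw [Finset.mem_compl] at this
      exact this hx'

lemma card_split {α : Type*} [Fintype α] (p q : α → Prop) :
    Nat.card {x // p x} = Nat.card {x // p x ∧ q x} + Nat.card {x // p x ∧ ¬ q x} := by
  classical
  rw [Nat.card_congr (Equiv.sumCompl (fun y : {x // p x} => q y.1)).symm, Nat.card_sum]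
  congr 1
  · exact Nat.card_congr (Equiv.subtypeSubtypeEquivSubtypeInter p q)
  · exact Nat.card_congr (Equiv.subtypeSubtypeEquivSubtypeInter p (fun x => ¬ q x))

lemma card_s_subsets (n s : ℕ) :
    Nat.card {S : Finset (Fin n) // S.card = s} = n.choose s := by
  rw [Nat.card_eq_fintype_card, Fintype.card_subtype]
  have : Finset.filter (fun x : Finset (Fin n) => x.card = s) Finset.univ =
      Finset.powersetCard s Finset.univ := by
    ext x
    simp [Finset.mem_powersetCard_univ]
  rw [this, Finset.card_powersetCard, Finset.card_univ, Fintype.card_fin]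

open Fin.NatCast in
lemma structure_lemma (r s m n : ℕ) (hs : s < r)
    (f : Fin (m+3) → {x : Finset (Fin n) // x.card = r})
    (hf : IsMon r s m n f) (hnc : ¬ IsCore r s m n f) :
    (Finset.univ.biUnion fun i => (f i).1).card < r + (m+2) * (r-s) := by
  set g : ℕ → Finset (Fin n) := fun k => (f (k : Fin (m+3))).1 with hg
  have hgcard : ∀ k, (g k).card = r := fun k => (f _).2
  have hadj : ∀ k : ℕ, ((g k) ∩ (g (k+1))).card = s := by
    intro k
    have h := (hf.2 _ _ (cyc_adj (k : Fin (m+3)))).2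
    have hcast : ((k : Fin (m+3)) + 1) = ((k + 1 : ℕ) : Fin (m+3)) := by push_cast; ring
    rwa [hcast] at h
  have hgt : g (m+3) = g 0 := by
    simp only [hg, Fin.natCast_self, Nat.cast_zero]
  -- prefix unions
  set U : ℕ → Finset (Fin n) := fun k => (Finset.range k).biUnion g with hU
  have hU1 : U 1 = g 0 := by simp [hU]
  have hUsucc : ∀ k, U (k+1) = U k ∪ g k := by
    intro k
    simp only [hU, Finset.range_add_one, Finset.biUnion_insert]
    rw [Finset.union_comm]
  have hgsubU : ∀ j k, j < k → g j ⊆ U k := by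
    intro j k hjk x hx
    exact Finset.mem_biUnion.mpr ⟨j, Finset.mem_range.mpr hjk, hx⟩
  have hcardsucc : ∀ k, (U (k+1)).card = (U k).card + (g k \ U k).card := by
    intro k
    rw [hUsucc k, Finset.union_comm, ← Finset.card_sdiff_add_card]
    ring
  have hstep_le : ∀ k, 1 ≤ k → (g k \ U k).card ≤ r - s := by
    intro k hk
    have h1 : g k \ U k ⊆ g k \ g (k-1) := by
      refine Finset.sdiff_subset_sdiff le_rfl ?_
      exact hgsubU (k-1) k (by omega)
    have h2 : (g k \ g (k-1)).card = r - s := by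
      have := Finset.card_inter_add_card_sdiff (g k) (g (k-1))
      have hint : ((g k) ∩ (g (k-1))).card = s := by
        rw [Finset.inter_comm]
        have := hadj (k-1)
        rwa [Nat.sub_add_cancel hk] at this
      rw [hint, hgcard k] at this
      omega
    rw [← h2]
    exact Finset.card_le_card h1
  have hcardU : ∀ k, (U (k+1)).card = r + ∑ j ∈ Finset.range k, (g (j+1) \ U (j+1)).card := by
    intro k
    induction k with
    | zero => simp [hU1, hgcard]
    | succ k ih =>
      rw [hcardsucc (k+1), ih, Finset.sum_range_succ]
      ring
  -- the union over Fin t equals U t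
  have hUnion : (Finset.univ.biUnion fun i => (f i).1) = U (m+3) := by
    ext x
    rw [hU]
    simp only [Finset.mem_biUnion, Finset.mem_univ, true_and, Finset.mem_range]
    constructor
    · rintro ⟨i, hi⟩
      exact ⟨i.val, i.isLt, by simpa [hg, Fin.cast_val_eq_self] using hi⟩
    · rintro ⟨k, hk, hx⟩
      exact ⟨(k : Fin (m+3)), hx⟩
  -- total bound
  have hbound : (U (m+3)).card ≤ r + (m+2) * (r-s) := by
    have : (U (m+2+1)).card = r + ∑ j ∈ Finset.range (m+2), (g (j+1) \ U (j+1)).card :=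
      hcardU (m+2)
    rw [show m+3 = m+2+1 from rfl, this]
    have hsum : ∑ j ∈ Finset.range (m+2), (g (j+1) \ U (j+1)).card ≤
        ∑ _j ∈ Finset.range (m+2), (r - s) :=
      Finset.sum_le_sum fun j _ => hstep_le (j+1) (by omega)
    rw [Finset.sum_const, Finset.card_range, smul_eq_mul] at hsum
    omega
  -- it remains: equality implies core
  rw [hUnion]
  rcases lt_or_eq_of_le hbound with h | heq
  · exact h
  exfalso
  apply hnc
  -- tightness of each step
  have htight : ∀ j ∈ Finset.range (m+2), (g (j+1) \ U (j+1)).card = r - s := by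
    have hsum : ∑ j ∈ Finset.range (m+2), (g (j+1) \ U (j+1)).card = (m+2) * (r-s) := by
      have := hcardU (m+2)
      rw [show m+3 = m+2+1 from rfl] at heq
      rw [this] at heq
      omega
    have hle : ∀ j ∈ Finset.range (m+2), (g (j+1) \ U (j+1)).card ≤ r - s :=
      fun j _ => hstep_le (j+1) (by omega)
    have hEq : ∑ j ∈ Finset.range (m+2), (g (j+1) \ U (j+1)).card =
        ∑ _j ∈ Finset.range (m+2), (r - s) := by
      rw [hsum, Finset.sum_const, Finset.card_range, smul_eq_mul]
    exact fun j hj => (Finset.sum_eq_sum_iff_of_le hle).mp hEq j hj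
  have hinterU : ∀ k, 1 ≤ k → k ≤ m+2 → (g k ∩ U k) = g k ∩ g (k-1) ∧ (g k ∩ U k).card = s := by
    intro k hk1 hk2
    have h1 : (g k ∩ U k).card = s := by
      have h2 := htight (k-1) (Finset.mem_range.mpr (by omega))
      rw [Nat.sub_add_cancel hk1] at h2
      have h3 := Finset.card_inter_add_card_sdiff (g k) (U k)
      rw [h2, hgcard k] at h3
      omega
    have hsub : g k ∩ g (k-1) ⊆ g k ∩ U k :=
      Finset.inter_subset_inter le_rfl (hgsubU (k-1) k (by omega))
    have hcardint : (g k ∩ g (k-1)).card = s := by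
      rw [Finset.inter_comm]
      have := hadj (k-1)
      rwa [Nat.sub_add_cancel hk1] at this
    refine ⟨(Finset.eq_of_subset_of_card_le hsub (by rw [h1, hcardint])).symm, h1⟩
  -- the closing edge
  have hclose : (g 0 ∩ g (m+2)).card = s := by
    rw [Finset.inter_comm]
    have := hadj (m+2)
    rwa [show m+2+1 = m+3 from rfl, hgt] at this
  -- downward induction
  set S : Finset (Fin n) := g 0 ∩ g (m+2) with hSdef
  have hdown : ∀ j, j ≤ m+1 → g 0 ∩ g (m+2-j) = g (m+2-j) ∩ U (m+2-j) ∧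
      g 0 ∩ g (m+2-j) = S := by
    intro j
    induction j with
    | zero =>
      intro _
      simp only [Nat.sub_zero]
      constructor
      · apply Finset.eq_of_subset_of_card_le
        · intro x hx
          rw [Finset.mem_inter] at hx ⊢
          exact ⟨hx.2, hgsubU 0 (m+2) (by omega) hx.1⟩
        · rw [hclose, (hinterU (m+2) (by omega) le_rfl).2]
      · exact hSdef.symm
    | succ j ih =>
      intro hj
      obtain ⟨ih1, ih2⟩ := ih (by omega)
      set k : ℕ := m + 2 - (j+1) with hk
      have hk1 : 1 ≤ k := by omega
      have hk2 : k ≤ m + 2 := by omega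
      have hkk : m + 2 - j = k + 1 := by omega
      rw [hkk] at ih1 ih2
      obtain ⟨e1, e2⟩ := hinterU (k+1) (by omega) (by omega)
      rw [Nat.add_sub_cancel] at e1
      -- g 0 ∩ g (k+1) = g (k+1) ∩ g k  has card s, and is ⊆ g 0 ∩ g k ⊆ g k ∩ U k with card s
      obtain ⟨e3, e4⟩ := hinterU k hk1 hk2
      have hchain1 : g 0 ∩ g (k+1) ⊆ g 0 ∩ g k := by
        intro x hx
        have hx' := hx
        rw [ih1, e1, Finset.mem_inter] at hx'
        rw [Finset.mem_inter] at hx ⊢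
        exact ⟨hx.1, hx'.2⟩
      have hchain2 : g 0 ∩ g k ⊆ g k ∩ U k := by
        intro x hx
        rw [Finset.mem_inter] at hx ⊢
        exact ⟨hx.2, hgsubU 0 k (by omega) hx.1⟩
      have hc1 : (g 0 ∩ g (k+1)).card = s := by rw [ih1, e2]
      have heq1 : g 0 ∩ g (k+1) = g 0 ∩ g k :=
        Finset.eq_of_subset_of_card_le hchain1 (by
          rw [hc1]
          exact le_trans (Finset.card_le_card hchain2) (le_of_eq e4))
      have heq2 : g 0 ∩ g k = g k ∩ U k :=
        Finset.eq_of_subset_of_card_le hchain2 (by rw [e4, ← heq1, hc1])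
      exact ⟨heq2, by rw [← heq1, ih2]⟩
  -- S is contained in every g k, and g 0 ∩ g k = S for k in [1, m+2]
  have hS0k : ∀ k, 1 ≤ k → k ≤ m+2 → g 0 ∩ g k = S := by
    intro k hk1 hk2
    have := (hdown (m+2-k) (by omega)).2
    rwa [show m+2-(m+2-k) = k by omega] at this
  have hSsubk : ∀ k, k ≤ m+2 → S ⊆ g k := by
    intro k hk
    rcases Nat.eq_zero_or_pos k with rfl | hk1
    · rw [hSdef]; exact Finset.inter_subset_left
    · rw [← hS0k k hk1 hk]; exact Finset.inter_subset_right
  have hgUS : ∀ k, 1 ≤ k → k ≤ m+2 → g k ∩ U k = S := by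
    intro k hk1 hk2
    have := (hdown (m+2-k) (by omega)).1
    rw [show m+2-(m+2-k) = k by omega] at this
    rw [← this, hS0k k hk1 hk2]
  -- conclude core
  refine ⟨S, by rw [hSdef] at hclose ⊢; exact hclose, ?_⟩
  have key : ∀ a b : ℕ, a < b → b ≤ m + 2 → g a ∩ g b = S := by
    intro a b hab hb
    apply Finset.Subset.antisymm
    · intro x hx
      rw [Finset.mem_inter] at hx
      rw [← hgUS b (by omega) hb, Finset.mem_inter]
      exact ⟨hx.2, hgsubU a b hab hx.1⟩
    · intro x hx
      rw [Finset.mem_inter]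
      exact ⟨hSsubk a (by omega) hx, hSsubk b hb hx⟩
  intro i j hij
  have hfi : (f i).1 = g i.val := by simp only [hg, Fin.cast_val_eq_self]
  have hfj : (f j).1 = g j.val := by simp only [hg, Fin.cast_val_eq_self]
  rw [hfi, hfj]
  have hvij : i.val ≠ j.val := fun h => hij (Fin.ext h)
  have hi2 : i.val ≤ m + 2 := by omega
  have hj2 : j.val ≤ m + 2 := by have := j.isLt; omega
  rcases lt_or_gt_of_ne hvij with h | h
  · exact key i.val j.val h hj2
  · rw [Finset.inter_comm]; exact key j.val i.val h hi2

lemma core_card (r s m n : ℕ) (hs : s < r) :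
    Nat.card {f : Fin (m+3) → {x : Finset (Fin n) // x.card = r} //
      IsMon r s m n f ∧ IsCore r s m n f} =
    n.choose s * ∏ i ∈ Finset.range (m+3), (n - s - i * (r-s)).choose (r-s) := by
  obtain ⟨e⟩ := core_equiv r s m n hs
  rw [Nat.card_congr e, Nat.card_eq_fintype_card, Fintype.card_sigma]
  have hfib : ∀ S : {S : Finset (Fin n) // S.card = s},
      Fintype.card {A : Fin (m+3) → Finset (Fin n) //
        (∀ i, A i ⊆ (S.1)ᶜ ∧ (A i).card = r - s) ∧ ∀ i j, i ≠ j → Disjoint (A i) (A j)} =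
      ∏ i ∈ Finset.range (m+3), (n - s - i * (r-s)).choose (r-s) := by
    intro S
    have hc : (S.1)ᶜ.card = n - s := by
      rw [Finset.card_compl, Fintype.card_fin, S.2]
    rw [← Nat.card_eq_fintype_card, card_disjoint_tuples (r-s) (S.1)ᶜ (m+3), hc]
  rw [Finset.sum_congr rfl (fun S _ => hfib S), Finset.sum_const, Finset.card_univ,
    ← Nat.card_eq_fintype_card, card_s_subsets, smul_eq_mul]

lemma noncore_bound (r s m n : ℕ) (hs : s < r) :
    Nat.card {f : Fin (m+3) → {x : Finset (Fin n) // x.card = r} //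
      IsMon r s m n f ∧ ¬ IsCore r s m n f} ≤
    (n+1) ^ (r + (m+2)*(r-s) - 1) * (2 ^ (r + (m+2)*(r-s) - 1)) ^ (m+3) := by
  classical
  have hcard2 : ((n+1) ^ (r + (m+2)*(r-s) - 1) * (2 ^ (r + (m+2)*(r-s) - 1)) ^ (m+3) : ℕ) =
      Nat.card ((Fin (r + (m+2)*(r-s) - 1) → Option (Fin n)) × (Fin (m+3) → Finset (Fin (r + (m+2)*(r-s) - 1)))) := by
    simp [Nat.card_eq_fintype_card, Fintype.card_fun, Fintype.card_option, Fintype.card_fin,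
      Fintype.card_finset]
  rw [hcard2]
  have main : ∀ x : {f : Fin (m+3) → {y : Finset (Fin n) // y.card = r} //
      IsMon r s m n f ∧ ¬ IsCore r s m n f},
      ∃ (h : Fin (r + (m+2)*(r-s) - 1) → Option (Fin n)) (gE : Fin (m+3) → Finset (Fin (r + (m+2)*(r-s) - 1))),
        ∀ i, (gE i).image h = ((x.1 i).1).image some := by
    rintro ⟨f, hf⟩
    set U : Finset (Fin n) := Finset.univ.biUnion fun i => (f i).1 with hU
    have hUcard : U.card ≤ r + (m+2)*(r-s) - 1 := by
      have h2 := structure_lemma r s m n hs f hf.1 hf.2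
      rw [← hU] at h2
      omega
    have hemb : Nonempty ({y : Fin n // y ∈ U} ↪ Fin (r + (m+2)*(r-s) - 1)) :=
      Function.Embedding.nonempty_of_card_le
        (by simpa [Fintype.card_coe, Fintype.card_fin] using hUcard)
    obtain ⟨e⟩ := hemb
    refine ⟨fun j => Option.map Subtype.val (Function.partialInv e j),
      fun i => Finset.image e (U.attach.filter (fun y => y.1 ∈ (f i).1)), fun i => ?_⟩
    ext z
    simp only [Finset.mem_image, Finset.image_image, Finset.mem_filter, Finset.mem_attach,
      true_and]
    constructor
    · rintro ⟨y, hy, hz⟩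
      rw [Function.comp_apply, Function.partialInv_left e.injective] at hz
      exact ⟨y.1, hy, hz⟩
    · rintro ⟨w, hw, hz⟩
      have hwU : w ∈ U := Finset.mem_biUnion.mpr ⟨i, Finset.mem_univ _, hw⟩
      refine ⟨⟨w, hwU⟩, hw, ?_⟩
      rw [Function.comp_apply, Function.partialInv_left e.injective]
      exact hz
  refine Nat.card_le_card_of_injective
    (fun x => ((main x).choose, (main x).choose_spec.choose)) ?_
  intro x y hxy
  have hx := (main x).choose_spec.choose_spec
  have hy := (main y).choose_spec.choose_spec
  refine Subtype.ext (funext fun i => Subtype.ext ?_)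
  refine Finset.image_injective (Option.some_injective _) ?_
  have key := congrFun (congrArg
    (fun p : (Fin (r + (m+2)*(r-s) - 1) → Option (Fin n)) ×
        (Fin (m+3) → Finset (Fin (r + (m+2)*(r-s) - 1))) =>
      fun i => Finset.image p.1 (p.2 i)) hxy) i
  simp only at key
  rw [hx i, hy i] at key
  exact key
lemma choose_asymp (a k : ℕ) :
    Tendsto (fun n : ℕ => ((n - a).choose k : ℝ) / (n:ℝ)^k) atTop
      (nhds (1 / k.factorial)) := by
  have hlim : Tendsto (fun n : ℕ =>
      (1 / (k.factorial : ℝ)) * ∏ i ∈ Finset.range k, (((n:ℝ) - (a + i)) / n)) atTop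
      (nhds (1 / k.factorial)) := by
    have h1 : Tendsto (fun n : ℕ =>
        ∏ i ∈ Finset.range k, (((n:ℝ) - (a + i)) / n)) atTop (nhds 1) := by
      have := tendsto_finset_prod (f := fun (i : ℕ) (n : ℕ) => ((n:ℝ) - (a + i)) / n)
        (x := atTop) (a := fun _ => (1:ℝ)) (Finset.range k) (fun i _ => ?_)
      · simpa using this
      · have h2 : Tendsto (fun n : ℕ => 1 - ((a + i : ℝ)) / n) atTop (nhds (1 - 0)) :=
          tendsto_const_nhds.sub (tendsto_const_div_atTop_nhds_zero_nat _)
        rw [sub_zero] at h2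
        refine h2.congr' ?_
        filter_upwards [eventually_ge_atTop 1] with n hn
        have hn0 : (n:ℝ) ≠ 0 := Nat.cast_ne_zero.mpr (by omega)
        field_simp
    simpa using tendsto_const_nhds.mul h1
  refine hlim.congr' ?_
  filter_upwards [eventually_ge_atTop (a + k + 1)] with n hn
  have hn0 : (n:ℝ) ≠ 0 := Nat.cast_ne_zero.mpr (by omega)
  have hprod : ∏ i ∈ Finset.range k, ((n:ℝ) - (a + i)) = ((n - a).descFactorial k : ℝ) := by
    rw [Nat.descFactorial_eq_prod_range, Nat.cast_prod]
    refine Finset.prod_congr rfl fun i hi => ?_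
    rw [Finset.mem_range] at hi
    rw [Nat.cast_sub (by omega), Nat.cast_sub (by omega)]
    push_cast
    ring
  have hdf : ((n - a).descFactorial k : ℝ) = (k.factorial : ℝ) * ((n - a).choose k : ℝ) := by
    rw [← Nat.cast_mul, Nat.descFactorial_eq_factorial_mul_choose]
  rw [Finset.prod_div_distrib, hprod, hdf, Finset.prod_const, Finset.card_range]
  have hk0 : (k.factorial : ℝ) ≠ 0 := Nat.cast_ne_zero.mpr k.factorial_ne_zero
  field_simp

lemma aux_pow_ratio (M K : ℕ) (hM : 1 ≤ M) :
    Tendsto (fun n : ℕ => (((n+1 : ℕ) : ℝ))^(M-1) * (K:ℝ) / (n:ℝ)^M) atTop (nhds 0) := by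
  have h1 : Tendsto (fun n : ℕ => (((n:ℝ)+1)/n)^(M-1) * (K:ℝ) * (1/n)) atTop (nhds 0) := by
    have h2 : Tendsto (fun n : ℕ => ((n:ℝ)+1)/n) atTop (nhds 1) := by
      have h3 : Tendsto (fun n : ℕ => 1 + 1/(n:ℝ)) atTop (nhds (1 + 0)) :=
        tendsto_const_nhds.add (tendsto_one_div_atTop_nhds_zero_nat)
      rw [add_zero] at h3
      refine h3.congr' ?_
      filter_upwards [eventually_ge_atTop 1] with n hn
      have hn0 : (n:ℝ) ≠ 0 := Nat.cast_ne_zero.mpr (by omega)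
      field_simp
    have := ((h2.pow (M-1)).mul (tendsto_const_nhds (x := (K:ℝ)))).mul
      tendsto_one_div_atTop_nhds_zero_nat
    simpa using this
  refine h1.congr' ?_
  filter_upwards [eventually_ge_atTop 1] with n hn
  have hn0 : (n:ℝ) ≠ 0 := Nat.cast_ne_zero.mpr (by omega)
  have hMn : (n:ℝ)^M = (n:ℝ)^(M-1) * n := by
    rw [← pow_succ]
    congr 1
    omega
  push_cast
  rw [hMn, div_pow]
  field_simp

/-- Burkin's theorem: for fixed `0 ≤ s < r` and fixed `t ≥ 3`,
`mon(C_t) ~ N · N1 · (N1 / C(r,s))^(t-2)` as `n → ∞`. -/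
theorem stmt_0 (r s t : ℕ) (hs : s < r) (ht : 3 ≤ t) :
    Tendsto (fun n : ℕ =>
      (monCount t (johnsonGraph n r s) : ℝ) /
        ((n.choose r : ℝ) * ((r.choose s : ℝ) * ((n - r).choose (r - s) : ℝ)) *
          (((r.choose s : ℝ) * ((n - r).choose (r - s) : ℝ)) / (r.choose s : ℝ)) ^ (t - 2)))
      atTop (nhds 1) := by
  obtain ⟨m, rfl⟩ : ∃ m, t = m + 3 := ⟨t - 3, by omega⟩
  classical
  have hrs1 : 1 ≤ r - s := by omega
  -- the grand exponent
  set M : ℕ := s + (m+3)*(r-s) with hMdef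
  have hM' : r + (m+2)*(r-s) = M := by
    obtain ⟨dd, hdd⟩ : ∃ dd, r = s + dd := ⟨r - s, by omega⟩
    have h2 : r - s = dd := by omega
    rw [hMdef, h2, hdd]
    ring
  have hM1 : 1 ≤ M := by
    have : 1 ≤ (m+3)*(r-s) := Nat.one_le_iff_ne_zero.mpr (by positivity)
    omega
  -- the limit constant
  set c : ℝ := (1 / s.factorial) * (1 / ((r-s).factorial : ℝ))^(m+3) with hcdef
  have hcpos : 0 < c := by
    rw [hcdef]
    positivity
  -- natural number sequences
  set Lnat : ℕ → ℕ := fun n => n.choose s * ∏ i ∈ Finset.range (m+3),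
    (n - s - i * (r-s)).choose (r-s) with hLdef
  set Enat : ℕ → ℕ := fun n => Nat.card {f : Fin (m+3) → {x : Finset (Fin n) // x.card = r} //
    IsMon r s m n f ∧ ¬ IsCore r s m n f} with hEdef
  set Bnat : ℕ → ℕ := fun n => (n+1) ^ (M - 1) * (2 ^ (M - 1)) ^ (m+3) with hBdef
  -- decomposition of the mon count
  have hmon_eq : ∀ n, monCount (m+3) (johnsonGraph n r s) = Lnat n + Enat n := by
    intro n
    have h1 : monCount (m+3) (johnsonGraph n r s) =
        Nat.card {f : Fin (m+3) → {x : Finset (Fin n) // x.card = r} // IsMon r s m n f} := rfl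
    rw [h1, card_split (IsMon r s m n) (IsCore r s m n), core_card r s m n hs]
  have hE_le : ∀ n, Enat n ≤ Bnat n := by
    intro n
    rw [hEdef, hBdef]
    have := noncore_bound r s m n hs
    rwa [hM'] at this
  -- limit of Lnat / n^M
  have hLlim : Tendsto (fun n : ℕ => (Lnat n : ℝ) / (n:ℝ)^M) atTop (nhds c) := by
    have hprodlim : Tendsto (fun n : ℕ => ((n.choose s : ℝ) / (n:ℝ)^s) *
        ∏ i ∈ Finset.range (m+3),
          (((n - (s + i * (r-s))).choose (r-s) : ℝ) / (n:ℝ)^(r-s))) atTop (nhds c) := by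
      have h1 : Tendsto (fun n : ℕ => ((n.choose s : ℝ) / (n:ℝ)^s)) atTop
          (nhds (1 / s.factorial)) := by
        have := choose_asymp 0 s
        simpa using this
      have h2 : Tendsto (fun n : ℕ => ∏ i ∈ Finset.range (m+3),
          (((n - (s + i * (r-s))).choose (r-s) : ℝ) / (n:ℝ)^(r-s))) atTop
          (nhds (∏ _i ∈ Finset.range (m+3), (1 / ((r-s).factorial : ℝ)))) :=
        tendsto_finset_prod _ (fun i _ => choose_asymp (s + i * (r-s)) (r-s))
      rw [Finset.prod_const, Finset.card_range] at h2
      exact hcdef ▸ h1.mul h2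
    refine hprodlim.congr' ?_
    filter_upwards [eventually_ge_atTop 1] with n hn
    have hn0 : (n:ℝ) ≠ 0 := Nat.cast_ne_zero.mpr (by omega)
    rw [hLdef]
    push_cast
    rw [Finset.prod_div_distrib, Finset.prod_const, Finset.card_range,
      div_mul_div_comm, ← pow_mul, ← pow_add]
    have hexp : s + (r-s) * (m+3) = M := by rw [hMdef]; ring
    rw [hexp]
    congr 2
    refine Finset.prod_congr rfl fun i _ => ?_
    rw [Nat.sub_sub]
  -- limit of the denominator / n^M
  set Dr : ℕ → ℝ := fun n => (n.choose r : ℝ) * (r.choose s : ℝ) *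
    ((n - r).choose (r-s) : ℝ)^(m+2) with hDrdef
  have hDlim : Tendsto (fun n : ℕ => Dr n / (n:ℝ)^M) atTop (nhds c) := by
    have hclim : Tendsto (fun n : ℕ => ((n.choose r : ℝ) / (n:ℝ)^r) * (r.choose s : ℝ) *
        (((n - r).choose (r-s) : ℝ) / (n:ℝ)^(r-s))^(m+2)) atTop
        (nhds ((1 / r.factorial) * (r.choose s : ℝ) * (1 / ((r-s).factorial : ℝ))^(m+2))) := by
      have h1 : Tendsto (fun n : ℕ => ((n.choose r : ℝ) / (n:ℝ)^r)) atTop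
          (nhds (1 / r.factorial)) := by
        have := choose_asymp 0 r
        simpa using this
      exact (h1.mul tendsto_const_nhds).mul ((choose_asymp r (r-s)).pow (m+2))
    have hconst : (1 / (r.factorial : ℝ)) * (r.choose s : ℝ) *
        (1 / ((r-s).factorial : ℝ))^(m+2) = c := by
      have hfact : ((r.choose s : ℕ) : ℝ) * (s.factorial : ℝ) * ((r-s).factorial : ℝ)
          = (r.factorial : ℝ) := by
        exact_mod_cast congrArg (Nat.cast (R := ℝ))
          (Nat.choose_mul_factorial_mul_factorial hs.le)
      have hr0 : (r.factorial : ℝ) ≠ 0 := Nat.cast_ne_zero.mpr r.factorial_ne_zero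
      have hs0 : (s.factorial : ℝ) ≠ 0 := Nat.cast_ne_zero.mpr s.factorial_ne_zero
      have hrs0 : (((r-s).factorial : ℕ) : ℝ) ≠ 0 := Nat.cast_ne_zero.mpr (r-s).factorial_ne_zero
      have key : (1 / (r.factorial:ℝ)) * (r.choose s : ℝ) =
          (1/(s.factorial:ℝ)) * (1/(((r-s).factorial : ℕ):ℝ)) := by
        field_simp
        linear_combination hfact
      rw [hcdef, pow_succ]
      set X := (1 / (((r-s).factorial : ℕ) : ℝ))^(m+2) with hX
      linear_combination X * key
    rw [← hconst]
    refine hclim.congr' ?_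
    filter_upwards [eventually_ge_atTop 1] with n hn
    have hn0 : (n:ℝ) ≠ 0 := Nat.cast_ne_zero.mpr (by omega)
    rw [hDrdef]
    simp only
    rw [div_pow, mul_comm ((n.choose r : ℝ) / (n:ℝ)^r) (r.choose s : ℝ),
      mul_assoc, div_mul_div_comm, ← pow_mul, ← pow_add]
    have hexp : r + (r-s) * (m+2) = M := by rw [← hM']; ring
    rw [hexp]
    ring
  -- limit of Bnat / n^M
  have hBlim : Tendsto (fun n : ℕ => (Bnat n : ℝ) / (n:ℝ)^M) atTop (nhds 0) := by
    have := aux_pow_ratio M ((2 ^ (M - 1)) ^ (m+3)) hM1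
    refine this.congr ?_
    intro n
    rw [hBdef]
    push_cast
    ring_nf
  -- squeeze for the mon count
  have hmonlim : Tendsto (fun n : ℕ =>
      (monCount (m+3) (johnsonGraph n r s) : ℝ) / (n:ℝ)^M) atTop (nhds c) := by
    have hupper : Tendsto (fun n : ℕ => ((Lnat n : ℝ) + (Bnat n : ℝ)) / (n:ℝ)^M) atTop
        (nhds c) := by
      have := hLlim.add hBlim
      rw [add_zero] at this
      refine this.congr fun n => ?_
      rw [add_div]
    refine tendsto_of_tendsto_of_tendsto_of_le_of_le' hLlim hupper ?_ ?_
    · filter_upwards [eventually_ge_atTop 1] with n hn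
      have hpow : (0:ℝ) < (n:ℝ)^M := by positivity
      rw [hmon_eq n]
      push_cast
      have hE0 : (0:ℝ) ≤ (Enat n : ℝ) := Nat.cast_nonneg _
      exact div_le_div_of_nonneg_right (by linarith) hpow.le
    · filter_upwards [eventually_ge_atTop 1] with n hn
      have hpow : (0:ℝ) < (n:ℝ)^M := by positivity
      rw [hmon_eq n]
      push_cast
      have hEB : (Enat n : ℝ) ≤ (Bnat n : ℝ) := Nat.cast_le.mpr (hE_le n)
      exact div_le_div_of_nonneg_right (by linarith) hpow.le
  -- divide the two limits
  have hdiv : Tendsto (fun n : ℕ =>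
      ((monCount (m+3) (johnsonGraph n r s) : ℝ) / (n:ℝ)^M) / (Dr n / (n:ℝ)^M)) atTop
      (nhds 1) := by
    have := hmonlim.div hDlim hcpos.ne'
    rwa [div_self hcpos.ne'] at this
  -- identify the statement function
  have hfun : ∀ n : ℕ, (n.choose r : ℝ) * ((r.choose s : ℝ) * ((n - r).choose (r - s) : ℝ)) *
      (((r.choose s : ℝ) * ((n - r).choose (r - s) : ℝ)) / (r.choose s : ℝ)) ^ (m+3-2)
      = Dr n := by
    intro n
    have hc0 : (r.choose s : ℝ) ≠ 0 :=
      Nat.cast_ne_zero.mpr (Nat.choose_pos hs.le).ne'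
    have hsimp : ((r.choose s : ℝ) * ((n - r).choose (r - s) : ℝ) / (r.choose s : ℝ))
        = ((n - r).choose (r - s) : ℝ) := by
      rw [mul_comm, mul_div_assoc, div_self hc0, mul_one]
    rw [hsimp, hDrdef]
    simp only
    have h32 : m + 3 - 2 = m + 1 := by omega
    rw [h32, show m + 2 = (m+1) + 1 from rfl, pow_succ]
    ring
  refine hdiv.congr' ?_
  filter_upwards [eventually_ge_atTop 1] with n hn
  have hn0 : (n:ℝ) ≠ 0 := Nat.cast_ne_zero.mpr (by omega)
  have hpow : ((n:ℝ))^M ≠ 0 := pow_ne_zero _ hn0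
  rw [hfun n]
  rcases eq_or_ne (Dr n) 0 with h | h
  · rw [h]
    simp
  · field_simp
end

section
/- Let G be a vertex-transitive finite simple graph on N vertices with adjacency matrix A, let t ≥ 4 be an integer, and let x be any vertex of G. Then 0 ≤ hom(C_t, G) − mon(C_t, G) ≤ t · N · Σ_{k=2}^{t−2} (A^k)_{xx} · (A^{t−k})_{xx}. -/
open Filter

namespace Stmt11Aux

open SimpleGraph
open Fin.NatCast

variable {V : Type*} [Fintype V] [DecidableEq V] (G : SimpleGraph V) [DecidableRel G.Adj]

def WalkFn (k : ℕ) (u v : V) : Type _ :=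
  {w : Fin (k+1) → V // w 0 = u ∧ w (Fin.last k) = v ∧
    ∀ i : Fin k, G.Adj (w i.castSucc) (w i.succ)}

noncomputable instance (k : ℕ) (u v : V) : Fintype (WalkFn G k u v) := by
  unfold WalkFn; exact Fintype.ofFinite _

noncomputable def walkFnEquiv (k : ℕ) (u v : V) :
    (Σ a : {a : V // G.Adj u a}, WalkFn G k a.1 v) ≃ WalkFn G (k+1) u v := by
  refine Equiv.ofBijective
    (fun s => ⟨Fin.cons u s.2.1, Fin.cons_zero _ _, ?_, ?_⟩) ⟨?_, ?_⟩
  · rw [← Fin.succ_last, Fin.cons_succ]; exact s.2.2.2.1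
  · intro i
    refine Fin.cases ?_ (fun j => ?_) i
    · have h0 := s.2.2.1
      simp only [Fin.castSucc_zero, Fin.cons_zero, Fin.cons_succ]
      rw [h0]
      exact s.1.2
    · have := s.2.2.2.2 j
      rw [← Fin.succ_castSucc]; exact this
  · rintro ⟨⟨a, ha⟩, ⟨w, hw0, hwl, hwa⟩⟩ ⟨⟨a', ha'⟩, ⟨w', hw0', hwl', hwa'⟩⟩ h
    have hww : Fin.cons u w = (Fin.cons u w' : Fin (k+2) → V) := congrArg Subtype.val h
    have hw : w = w' := by
      funext i
      have := congrFun hww i.succ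
      simpa [Fin.cons_succ] using this
    subst hw
    have : a = a' := hw0.symm.trans hw0'
    subst this
    rfl
  · rintro ⟨w, hw0, hwl, hwa⟩
    refine ⟨⟨⟨w 1, ?_⟩, ⟨Fin.tail w, rfl, ?_, fun i => ?_⟩⟩, ?_⟩
    · have := hwa 0
      simp only [Fin.castSucc_zero, Fin.succ_zero_eq_one] at this
      rwa [hw0] at this
    · unfold Fin.tail; rw [Fin.succ_last]; exact hwl
    · have := hwa i.succ
      unfold Fin.tail
      rwa [← Fin.succ_castSucc] at this
    · refine Subtype.ext ?_
      show Fin.cons u (Fin.tail w) = w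
      rw [← hw0]
      exact Fin.cons_self_tail w

lemma card_walkFn (k : ℕ) (u v : V) :
    Fintype.card (WalkFn G k u v) = (G.adjMatrix ℕ ^ k) u v := by
  induction k generalizing u with
  | zero =>
    rw [pow_zero]
    by_cases h : u = v
    · subst h
      rw [Matrix.one_apply_eq]
      rw [Fintype.card_eq_one_iff]
      refine ⟨⟨fun _ => u, rfl, rfl, fun i => i.elim0⟩, ?_⟩
      rintro ⟨w, hw0, hwl, -⟩
      refine Subtype.ext (funext fun i => ?_)
      show w i = u
      rw [Fin.fin_one_eq_zero i, hw0]
    · rw [Matrix.one_apply_ne h, Fintype.card_eq_zero_iff]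
      refine ⟨fun w => h ?_⟩
      rcases w with ⟨w, hw0, hwl, -⟩
      rw [← hw0, ← hwl]; rfl
  | succ k ih =>
    rw [← Fintype.card_congr (walkFnEquiv G k u v), Fintype.card_sigma,
      pow_succ', adjMatrix_mul_apply]
    rw [Finset.sum_subtype (G.neighborFinset u) (fun a => G.mem_neighborFinset u a)
      (fun a => (G.adjMatrix ℕ ^ k) a v)]
    exact Finset.sum_congr rfl fun a _ => ih a.1

noncomputable def walkFnIso (φ : G ≃g G) (k : ℕ) (u v : V) :
    WalkFn G k u v ≃ WalkFn G k (φ u) (φ v) where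
  toFun := fun w => ⟨fun i => φ (w.1 i), congrArg φ w.2.1, congrArg φ w.2.2.1,
    fun i => φ.map_adj_iff.2 (w.2.2.2 i)⟩
  invFun := fun w => ⟨fun i => φ.symm (w.1 i),
    (congrArg φ.symm w.2.1).trans (φ.symm_apply_apply u),
    (congrArg φ.symm w.2.2.1).trans (φ.symm_apply_apply v),
    fun i => φ.symm.map_adj_iff.2 (w.2.2.2 i)⟩
  left_inv := fun w => Subtype.ext (funext fun i => φ.symm_apply_apply _)
  right_inv := fun w => Subtype.ext (funext fun i => φ.apply_symm_apply _)

def recon (t k : ℕ) [NeZero t] (a : Fin t) (w1 : Fin (k+1) → V) (w2 : Fin (t-k+1) → V) :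
    Fin t → V :=
  fun j =>
    if h : ((j - a : Fin t) : ℕ) ≤ k then w1 ⟨((j - a : Fin t) : ℕ), by omega⟩
    else w2 ⟨((j - a : Fin t) : ℕ) - k, by have := (j - a).isLt; omega⟩

lemma adj_succ_cycle {t : ℕ} [NeZero t] (ht : 2 ≤ t) (c : Fin t) :
    (cycleGraph t).Adj c (c + 1) := by
  rw [cycleGraph_adj']
  right
  rw [add_sub_cancel_left, Fin.val_one']
  exact Nat.mod_eq_of_lt (by omega)

lemma exists_decomp {t : ℕ} [NeZero t] (ht : 4 ≤ t) (f : Fin t → V)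
    (hf : ∀ a b, (cycleGraph t).Adj a b → G.Adj (f a) (f b))
    (hni : ¬ Function.Injective f) :
    ∃ k ∈ Finset.Icc 2 (t - 2), ∃ (a : Fin t)
      (w1 : WalkFn G k (f a) (f a)) (w2 : WalkFn G (t - k) (f a) (f a)),
      recon t k a w1.1 w2.1 = f := by
  have hsucc : ∀ c : Fin t, G.Adj (f c) (f (c + 1)) :=
    fun c => hf _ _ (adj_succ_cycle (by omega) c)
  have hstep : ∀ (a : Fin t) (m : ℕ),
      (a + ((m + 1 : ℕ) : Fin t)) = (a + ((m : ℕ) : Fin t)) + 1 := by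
    intro a m; push_cast; rw [add_assoc]
  have key : ∀ a b : Fin t, (a : ℕ) < (b : ℕ) → f a = f b →
      ∃ k ∈ Finset.Icc 2 (t - 2), ∃ (a : Fin t)
      (w1 : WalkFn G k (f a) (f a)) (w2 : WalkFn G (t - k) (f a) (f a)),
      recon t k a w1.1 w2.1 = f := by
    intro a b hab hfab
    set k := (b : ℕ) - (a : ℕ) with hkdef
    have hbt : (b : ℕ) < t := b.isLt
    have hb : b = a + ((k : ℕ) : Fin t) := by
      refine Fin.ext ?_
      rw [Fin.val_add, Fin.val_cast_of_lt (by omega), Nat.mod_eq_of_lt (by omega)]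
      omega
    have hk1 : k ≠ 1 := by
      intro h1
      have : b = a + 1 := by
        rw [hb, h1]; norm_num
      exact G.loopless.irrefl (f a) (by nth_rewrite 2 [hfab]; rw [this]; exact hsucc a)
    have hkt1 : k ≠ t - 1 := by
      intro h1
      have ha0 : (a : ℕ) = 0 := by omega
      have hb1 : (b : ℕ) = t - 1 := by omega
      have : a = b + 1 := by
        refine Fin.ext ?_
        rw [Fin.val_add, Fin.val_one']
        have h1t : 1 % t = 1 := Nat.mod_eq_of_lt (by omega)
        rw [h1t, hb1, ha0]
        have h2 : t - 1 + 1 = t := by omega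
        rw [h2, Nat.mod_self]
      exact G.loopless.irrefl (f b) (by nth_rewrite 2 [hfab.symm]; rw [this]; exact hsucc b)
    have hk2 : 2 ≤ k := by omega
    have hkt2 : k ≤ t - 2 := by omega
    refine ⟨k, Finset.mem_Icc.2 ⟨hk2, hkt2⟩, a, ?_, ?_, ?_⟩
    · refine ⟨fun i => f (a + ((i : ℕ) : Fin t)), ?_, ?_, ?_⟩
      · simp
      · show f (a + (((Fin.last k) : ℕ) : Fin t)) = f a
        rw [Fin.val_last, ← hb, hfab]
      · intro i
        show G.Adj (f (a + (((i.castSucc) : ℕ) : Fin t))) (f (a + (((i.succ) : ℕ) : Fin t)))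
        rw [Fin.coe_castSucc, Fin.val_succ, hstep]
        exact hsucc _
    · refine ⟨fun i => f (a + ((k + (i : ℕ) : ℕ) : Fin t)), ?_, ?_, ?_⟩
      · show f (a + ((k + ((0 : Fin (t-k+1)) : ℕ) : ℕ) : Fin t)) = f a
        simp only [Fin.val_zero, Nat.add_zero]
        rw [← hb, hfab]
      · show f (a + ((k + ((Fin.last (t-k)) : ℕ) : ℕ) : Fin t)) = f a
        rw [Fin.val_last]
        have : k + (t - k) = t := by omega
        rw [this, Fin.natCast_self, add_zero]
      · intro i
        show G.Adj (f (a + ((k + ((i.castSucc) : ℕ) : ℕ) : Fin t)))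
          (f (a + ((k + ((i.succ) : ℕ) : ℕ) : Fin t)))
        rw [Fin.coe_castSucc, Fin.val_succ, ← Nat.add_assoc, hstep]
        exact hsucc _
    · funext j
      have hjlt := (j - a).isLt
      have hj : ∀ m : ℕ, m = ((j - a : Fin t) : ℕ) → a + ((m : ℕ) : Fin t) = j := by
        intro m hm
        rw [hm, Fin.cast_val_eq_self, add_comm]
        exact sub_add_cancel j a
      rw [recon]
      split_ifs with h
      · show f (a + ((((j - a : Fin t) : ℕ) : ℕ) : Fin t)) = f j
        rw [hj _ rfl]
      · show f (a + ((k + (((j - a : Fin t) : ℕ) - k) : ℕ) : Fin t)) = f j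
        have : k + (((j - a : Fin t) : ℕ) - k) = ((j - a : Fin t) : ℕ) := by omega
        rw [this, hj _ rfl]
  rw [Function.not_injective_iff] at hni
  obtain ⟨i, j, hfij, hij⟩ := hni
  rcases lt_or_gt_of_ne (fun h : (i : ℕ) = (j : ℕ) => hij (Fin.ext h)) with h | h
  · exact key i j h hfij
  · exact key j i h hfij.symm

end Stmt11Aux

open Stmt11Aux SimpleGraph in
/-- For a vertex-transitive graph `G` on `N` vertices, any vertex `x` and `t ≥ 4`:
`0 ≤ hom(C_t,G) − mon(C_t,G) ≤ t · N · Σ_{k=2}^{t−2} (A^k)_{xx} · (A^{t−k})_{xx}`. -/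
theorem stmt_11 {V : Type*} [Fintype V] [DecidableEq V] (G : SimpleGraph V)
    [DecidableRel G.Adj]
    (hvt : ∀ x y : V, ∃ φ : G ≃g G, φ x = y)
    (t : ℕ) (ht : 4 ≤ t) (x : V) :
    (0 : ℤ) ≤ (homCount t G : ℤ) - (monCount t G : ℤ) ∧
      (homCount t G : ℤ) - (monCount t G : ℤ) ≤
        (t : ℤ) * (Fintype.card V : ℤ) *
          ∑ k ∈ Finset.Icc 2 (t - 2),
            (((G.adjMatrix ℕ) ^ k) x x : ℤ) * (((G.adjMatrix ℕ) ^ (t - k)) x x : ℤ) := by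
  classical
  haveI : NeZero t := ⟨by omega⟩
  set P : (Fin t → V) → Prop :=
    fun f => ∀ a b, (SimpleGraph.cycleGraph t).Adj a b → G.Adj (f a) (f b) with hP
  -- split homCount
  have hsplit : homCount t G = monCount t G +
      Nat.card {f : Fin t → V // P f ∧ ¬ Function.Injective f} := by
    rw [homCount, monCount]
    rw [← Nat.card_congr
      (Equiv.sumCompl (fun g : {f : Fin t → V // P f} => Function.Injective g.1))]
    rw [Nat.card_sum]
    congr 1
    · exact Nat.card_congr
        ((Equiv.subtypeSubtypeEquivSubtypeInter P (fun f => Function.Injective f)).trans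
          (Equiv.subtypeEquivRight fun f => and_comm))
    · exact Nat.card_congr
        (Equiv.subtypeSubtypeEquivSubtypeInter P (fun f => ¬ Function.Injective f))
  -- the target sigma type
  let T : Type _ := Σ k : {k : ℕ // k ∈ Finset.Icc 2 (t - 2)},
    Fin t × Σ v : V, WalkFn G k.1 v v × WalkFn G (t - k.1) v v
  -- injection from bad homs into T
  have hle : Nat.card {f : Fin t → V // P f ∧ ¬ Function.Injective f} ≤ Nat.card T := by
    have hex : ∀ F : {f : Fin t → V // P f ∧ ¬ Function.Injective f},
        ∃ s : T, recon t s.1.1 s.2.1 s.2.2.2.1.1 s.2.2.2.2.1 = F.1 := by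
      rintro ⟨f, hf, hni⟩
      obtain ⟨k, hk, a, w1, w2, hr⟩ := exists_decomp G ht f hf hni
      exact ⟨⟨⟨k, hk⟩, a, f a, w1, w2⟩, hr⟩
    refine Nat.card_le_card_of_injective (fun F => (hex F).choose) ?_
    intro F F' h
    refine Subtype.ext ?_
    rw [← (hex F).choose_spec, ← (hex F').choose_spec]
    exact congrArg (fun s : T => recon t s.1.1 s.2.1 s.2.2.2.1.1 s.2.2.2.2.1) h
  -- diagonal entries are constant by vertex-transitivity
  have hdiag : ∀ (m : ℕ) (v : V),
      Fintype.card (WalkFn G m v v) = ((G.adjMatrix ℕ) ^ m) x x := by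
    intro m v
    obtain ⟨φ, hφ⟩ := hvt x v
    rw [← hφ]
    exact (Fintype.card_congr (walkFnIso G φ m x x)).symm.trans (card_walkFn G m x x)
  -- compute card T
  have hcardT : Nat.card T = ∑ k ∈ Finset.Icc 2 (t - 2),
      t * (Fintype.card V * (((G.adjMatrix ℕ) ^ k) x x * ((G.adjMatrix ℕ) ^ (t - k)) x x)) := by
    rw [Nat.card_eq_fintype_card]
    rw [Fintype.card_sigma]
    rw [← Finset.sum_coe_sort (Finset.Icc 2 (t - 2))
      (fun k => t * (Fintype.card V *
        (((G.adjMatrix ℕ) ^ k) x x * ((G.adjMatrix ℕ) ^ (t - k)) x x)))]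
    refine Finset.sum_congr rfl fun k _ => ?_
    rw [Fintype.card_prod, Fintype.card_fin, Fintype.card_sigma]
    congr 1
    calc ∑ v : V, Fintype.card (WalkFn G (k : ℕ) v v × WalkFn G (t - (k : ℕ)) v v)
        = ∑ _v : V, (((G.adjMatrix ℕ) ^ (k : ℕ)) x x * ((G.adjMatrix ℕ) ^ (t - (k : ℕ))) x x) :=
          Finset.sum_congr rfl fun v _ => by rw [Fintype.card_prod, hdiag, hdiag]
      _ = Fintype.card V *
            (((G.adjMatrix ℕ) ^ (k : ℕ)) x x * ((G.adjMatrix ℕ) ^ (t - (k : ℕ))) x x) := by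
          rw [Finset.sum_const, smul_eq_mul, Finset.card_univ]
  -- final cast computation
  have hfin : (Nat.card T : ℤ) = (t : ℤ) * (Fintype.card V : ℤ) *
      ∑ k ∈ Finset.Icc 2 (t - 2),
        (((G.adjMatrix ℕ) ^ k) x x : ℤ) * (((G.adjMatrix ℕ) ^ (t - k)) x x : ℤ) := by
    rw [hcardT]
    push_cast
    rw [Finset.mul_sum]
    exact Finset.sum_congr rfl fun k _ => by ring
  constructor
  · rw [hsplit]; push_cast; omega
  · rw [hsplit]
    push_cast
    have hle' : ((Nat.card {f : Fin t → V // P f ∧ ¬ Function.Injective f} : ℕ) : ℤ) ≤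
        (Nat.card T : ℤ) := Int.ofNat_le.2 hle
    rw [hfin] at hle'
    linarith
end

section
/- Let 1 ≤ s < r be fixed integers and let j ∈ {1,…,s}. Define λ_j(n) = Σ_{ℓ=max{0,j−s}}^{min{j,r−s}} (−1)^ℓ·C(j,ℓ)·C(r−j, r−s−ℓ)·C(n−r−j, r−s−ℓ) and N1(n) = C(r,s)·C(n−r,r−s). Then there exist a constant C > 0 and n0 such that for all n ≥ n0, |λ_j(n)/N1(n) − C(r−j,s−j)/C(r,s)| ≤ C/n; in particular λ_j(n)/N1(n) → C(r−j,s−j)/C(r,s) as n → ∞. -/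
open Filter

/-- The eigenvalues `λ_j` of the adjacency matrix of `G(n,r,s)`
(here `max{0, j-s}` is the truncated subtraction `j - s`). -/
def johnsonEigenvalue (n r s j : ℕ) : ℤ :=
  ∑ ℓ ∈ Finset.Icc (j - s) (min j (r - s)),
    (-1 : ℤ) ^ ℓ * (j.choose ℓ : ℤ) * ((r - j).choose (r - s - ℓ) : ℤ) *
      ((n - r - j).choose (r - s - ℓ) : ℤ)

/-- Pascal-type estimate: increasing the top of a binomial coefficient by `b`
increases it by at most `b * (a+b)^k`. -/
lemma aux_choose_add_le (a k : ℕ) :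
    ∀ b, (a + b).choose (k + 1) ≤ a.choose (k + 1) + b * (a + b) ^ k := by
  intro b
  induction b with
  | zero => simp
  | succ b ih =>
    have h1 : a + (b + 1) = (a + b) + 1 := by omega
    rw [h1, Nat.choose_succ_succ']
    have h2 : (a + b).choose k ≤ (a + b) ^ k := Nat.choose_le_pow _ _
    have h3 : (a + b) ^ k ≤ (a + b + 1) ^ k := Nat.pow_le_pow_left (by omega) _
    have h4 : b * (a + b) ^ k ≤ b * (a + b + 1) ^ k :=
      Nat.mul_le_mul_left _ h3
    calc (a + b).choose k + (a + b).choose (k + 1)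
        ≤ (a + b) ^ k + (a.choose (k + 1) + b * (a + b) ^ k) :=
          Nat.add_le_add h2 ih
      _ ≤ a.choose (k + 1) + (b * (a + b + 1) ^ k + (a + b + 1) ^ k) := by
          have := Nat.add_le_add h4 h3
          omega
      _ = a.choose (k + 1) + (b + 1) * (a + b + 1) ^ k := by ring

set_option maxHeartbeats 1000000 in
/-- For fixed `1 ≤ s < r` and `j ∈ {1,…,s}`, `λ_j(n)/N1(n) = C(r−j,s−j)/C(r,s) + O(1/n)`;
in particular `λ_j(n)/N1(n) → C(r−j,s−j)/C(r,s)` as `n → ∞`. -/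
theorem stmt_13 (r s j : ℕ) (hs1 : 1 ≤ s) (hs : s < r) (hj1 : 1 ≤ j) (hjs : j ≤ s) :
    (∃ C > (0 : ℝ), ∃ n₀ : ℕ, ∀ n ≥ n₀,
      |(johnsonEigenvalue n r s j : ℝ) /
          ((r.choose s : ℝ) * ((n - r).choose (r - s) : ℝ)) -
        ((r - j).choose (s - j) : ℝ) / (r.choose s : ℝ)| ≤ C / n) ∧
    Tendsto (fun n : ℕ =>
        (johnsonEigenvalue n r s j : ℝ) /
          ((r.choose s : ℝ) * ((n - r).choose (r - s) : ℝ)))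
      atTop (nhds (((r - j).choose (s - j) : ℝ) / (r.choose s : ℝ))) := by
  have hr1 : 1 ≤ r := by omega
  set k : ℕ := r - s with hkdef
  have hk1 : 1 ≤ k := by omega
  obtain ⟨k', hk'⟩ : ∃ k', k = k' + 1 := ⟨k - 1, by omega⟩
  set m : ℕ := min j k with hmdef
  -- the limit value rewritten
  have hsymm : (r - j).choose (s - j) = (r - j).choose k := by
    have h1 : (r - j) - (s - j) = k := by omega
    have h2 : s - j ≤ r - j := by omega
    rw [← h1, Nat.choose_symm h2]
  -- constants
  set K : ℝ := ((r ^ r * r + r * (r ^ r * r ^ r) : ℕ) : ℝ) with hKdef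
  have hKpos : (0 : ℝ) < K := by
    have h1 : 0 < r ^ r * r := Nat.mul_pos (pow_pos (by omega) r) (by omega)
    have h2 : 0 < r ^ r * r + r * (r ^ r * r ^ r) := by omega
    rw [hKdef]
    exact_mod_cast h2
  have hCspos : (0 : ℝ) < (r.choose s : ℝ) := by
    exact_mod_cast Nat.choose_pos (le_of_lt hs)
  set C : ℝ := K * (k.factorial : ℝ) * 2 ^ k / (r.choose s : ℝ) with hCdef
  have hCpos : 0 < C := by
    apply div_pos _ hCspos
    positivity
  set n₀ : ℕ := 4 * r + 4 with hn0def
  -- main bound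
  have main : ∀ n ≥ n₀, |(johnsonEigenvalue n r s j : ℝ) /
          ((r.choose s : ℝ) * ((n - r).choose (r - s) : ℝ)) -
        ((r - j).choose (s - j) : ℝ) / (r.choose s : ℝ)| ≤ C / n := by
    intro n hn
    have hnr : r + j + k ≤ n := by omega
    have hn1 : (1 : ℕ) ≤ n := by omega
    have hnpos : (0 : ℝ) < (n : ℝ) := by exact_mod_cast by omega
    -- rewrite the eigenvalue as main term plus tail
    have hjs0 : j - s = 0 := Nat.sub_eq_zero_of_le hjs
    have hIcc : Finset.Icc (j - s) m = Finset.range (m + 1) := by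
      rw [hjs0, Finset.range_eq_Ico, Finset.Ico_add_one_right_eq_Icc]
    have hje : (johnsonEigenvalue n r s j : ℝ) =
        (∑ i ∈ Finset.range m, (-1 : ℝ) ^ (i + 1) * (j.choose (i + 1) : ℝ) *
            ((r - j).choose (k - (i + 1)) : ℝ) * ((n - r - j).choose (k - (i + 1)) : ℝ)) +
          ((r - j).choose k : ℝ) * ((n - r - j).choose k : ℝ) := by
      rw [johnsonEigenvalue]
      rw [show Finset.Icc (j - s) (min j (r - s)) = Finset.range (m + 1) from hIcc]
      push_cast [Finset.sum_range_succ']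
      simp
      rfl
    -- the difference of the two big binomials
    have hd1 : (n - r).choose k ≤ (n - r - j).choose k + j * n ^ k' := by
      have hab : (n - r - j) + j = n - r := by omega
      have h := aux_choose_add_le (n - r - j) k' j
      rw [hab] at h
      calc (n - r).choose k = (n - r).choose (k' + 1) := by rw [hk']
        _ ≤ (n - r - j).choose (k' + 1) + j * (n - r) ^ k' := h
        _ ≤ (n - r - j).choose k + j * n ^ k' := by
            rw [← hk']
            have : (n - r) ^ k' ≤ n ^ k' := Nat.pow_le_pow_left (by omega) _
            have := Nat.mul_le_mul_left j this
            omega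
    have hmono : (n - r - j).choose k ≤ (n - r).choose k :=
      Nat.choose_mono _ (by omega)
    have hdiff : |((n - r - j).choose k : ℝ) - ((n - r).choose k : ℝ)|
        ≤ (j : ℝ) * (n : ℝ) ^ k' := by
      have hnn : (0 : ℝ) ≤ ((n - r).choose k : ℝ) - ((n - r - j).choose k : ℝ) :=
        sub_nonneg.mpr (by exact_mod_cast hmono)
      rw [abs_sub_comm, abs_of_nonneg hnn]
      have : ((n - r).choose k : ℝ) ≤ ((n - r - j).choose k : ℝ) + j * n ^ k' := by
        exact_mod_cast hd1
      linarith
    -- bound the tail sum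
    have htail : |∑ i ∈ Finset.range m, (-1 : ℝ) ^ (i + 1) * (j.choose (i + 1) : ℝ) *
            ((r - j).choose (k - (i + 1)) : ℝ) * ((n - r - j).choose (k - (i + 1)) : ℝ)|
        ≤ (r : ℝ) * ((r ^ r * r ^ r : ℕ) : ℝ) * (n : ℝ) ^ k' := by
      calc |∑ i ∈ Finset.range m, (-1 : ℝ) ^ (i + 1) * (j.choose (i + 1) : ℝ) *
            ((r - j).choose (k - (i + 1)) : ℝ) * ((n - r - j).choose (k - (i + 1)) : ℝ)|
          ≤ ∑ i ∈ Finset.range m, |(-1 : ℝ) ^ (i + 1) * (j.choose (i + 1) : ℝ) *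
            ((r - j).choose (k - (i + 1)) : ℝ) * ((n - r - j).choose (k - (i + 1)) : ℝ)| :=
            Finset.abs_sum_le_sum_abs _ _
        _ ≤ ∑ _i ∈ Finset.range m, ((r ^ r * r ^ r : ℕ) : ℝ) * (n : ℝ) ^ k' := by
            apply Finset.sum_le_sum
            intro i hi
            have him : i < m := Finset.mem_range.mp hi
            have hb : j.choose (i + 1) * (r - j).choose (k - (i + 1)) *
                (n - r - j).choose (k - (i + 1)) ≤ r ^ r * r ^ r * n ^ k' := by
              have b1 : j.choose (i + 1) ≤ r ^ r := by
                calc j.choose (i + 1) ≤ j ^ (i + 1) := Nat.choose_le_pow _ _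
                  _ ≤ r ^ (i + 1) := Nat.pow_le_pow_left (by omega) _
                  _ ≤ r ^ r := Nat.pow_le_pow_right hr1 (by omega)
              have b2 : (r - j).choose (k - (i + 1)) ≤ r ^ r := by
                calc (r - j).choose (k - (i + 1)) ≤ (r - j) ^ (k - (i + 1)) :=
                      Nat.choose_le_pow _ _
                  _ ≤ r ^ (k - (i + 1)) := Nat.pow_le_pow_left (by omega) _
                  _ ≤ r ^ r := Nat.pow_le_pow_right hr1 (by omega)
              have b3 : (n - r - j).choose (k - (i + 1)) ≤ n ^ k' := by
                calc (n - r - j).choose (k - (i + 1)) ≤ (n - r - j) ^ (k - (i + 1)) :=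
                      Nat.choose_le_pow _ _
                  _ ≤ n ^ (k - (i + 1)) := Nat.pow_le_pow_left (by omega) _
                  _ ≤ n ^ k' := Nat.pow_le_pow_right hn1 (by omega)
              exact Nat.mul_le_mul (Nat.mul_le_mul b1 b2) b3
            have habs : |(-1 : ℝ) ^ (i + 1) * (j.choose (i + 1) : ℝ) *
                ((r - j).choose (k - (i + 1)) : ℝ) * ((n - r - j).choose (k - (i + 1)) : ℝ)|
                = (j.choose (i + 1) : ℝ) * ((r - j).choose (k - (i + 1)) : ℝ) *
                  ((n - r - j).choose (k - (i + 1)) : ℝ) := by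
              rw [abs_mul, abs_mul, abs_mul, abs_pow, abs_neg, abs_one, one_pow, one_mul,
                abs_of_nonneg (by positivity), abs_of_nonneg (by positivity),
                abs_of_nonneg (by positivity)]
            rw [habs]
            calc (j.choose (i + 1) : ℝ) * ((r - j).choose (k - (i + 1)) : ℝ) *
                  ((n - r - j).choose (k - (i + 1)) : ℝ)
                ≤ ((r ^ r : ℕ) : ℝ) * ((r ^ r : ℕ) : ℝ) * ((n ^ k' : ℕ) : ℝ) := by
                  exact_mod_cast hb
              _ = ((r ^ r * r ^ r : ℕ) : ℝ) * (n : ℝ) ^ k' := by push_cast; ring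
        _ = (m : ℝ) * (((r ^ r * r ^ r : ℕ) : ℝ) * (n : ℝ) ^ k') := by
            rw [Finset.sum_const, Finset.card_range]; simp [nsmul_eq_mul]
        _ ≤ (r : ℝ) * ((r ^ r * r ^ r : ℕ) : ℝ) * (n : ℝ) ^ k' := by
            have hm : (m : ℝ) ≤ (r : ℝ) := by exact_mod_cast (by omega : m ≤ r)
            have h1 : (0 : ℝ) ≤ ((r ^ r * r ^ r : ℕ) : ℝ) * (n : ℝ) ^ k' := by positivity
            nlinarith
    -- numerator bound
    have hnum : |(johnsonEigenvalue n r s j : ℝ) -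
        ((r - j).choose k : ℝ) * ((n - r).choose k : ℝ)| ≤ K * (n : ℝ) ^ k' := by
      rw [hje]
      have hsplit : (∑ i ∈ Finset.range m, (-1 : ℝ) ^ (i + 1) * (j.choose (i + 1) : ℝ) *
            ((r - j).choose (k - (i + 1)) : ℝ) * ((n - r - j).choose (k - (i + 1)) : ℝ)) +
          ((r - j).choose k : ℝ) * ((n - r - j).choose k : ℝ) -
          ((r - j).choose k : ℝ) * ((n - r).choose k : ℝ)
          = (∑ i ∈ Finset.range m, (-1 : ℝ) ^ (i + 1) * (j.choose (i + 1) : ℝ) *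
            ((r - j).choose (k - (i + 1)) : ℝ) * ((n - r - j).choose (k - (i + 1)) : ℝ)) +
          ((r - j).choose k : ℝ) * (((n - r - j).choose k : ℝ) - ((n - r).choose k : ℝ)) := by
        ring
      rw [hsplit]
      have hC1 : ((r - j).choose k : ℝ) ≤ ((r ^ r : ℕ) : ℝ) := by
        exact_mod_cast calc (r - j).choose k ≤ (r - j) ^ k := Nat.choose_le_pow _ _
          _ ≤ r ^ k := Nat.pow_le_pow_left (by omega) _
          _ ≤ r ^ r := Nat.pow_le_pow_right hr1 (by omega)
      have hC1' : (0 : ℝ) ≤ ((r - j).choose k : ℝ) := by positivity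
      calc |(∑ i ∈ Finset.range m, (-1 : ℝ) ^ (i + 1) * (j.choose (i + 1) : ℝ) *
            ((r - j).choose (k - (i + 1)) : ℝ) * ((n - r - j).choose (k - (i + 1)) : ℝ)) +
          ((r - j).choose k : ℝ) * (((n - r - j).choose k : ℝ) - ((n - r).choose k : ℝ))|
          ≤ |∑ i ∈ Finset.range m, (-1 : ℝ) ^ (i + 1) * (j.choose (i + 1) : ℝ) *
            ((r - j).choose (k - (i + 1)) : ℝ) * ((n - r - j).choose (k - (i + 1)) : ℝ)| +
            ((r - j).choose k : ℝ) * |((n - r - j).choose k : ℝ) - ((n - r).choose k : ℝ)| := by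
            rw [← abs_of_nonneg hC1', ← abs_mul, abs_of_nonneg hC1']
            exact abs_add_le _ _
        _ ≤ (r : ℝ) * ((r ^ r * r ^ r : ℕ) : ℝ) * (n : ℝ) ^ k' +
            ((r ^ r : ℕ) : ℝ) * ((j : ℝ) * (n : ℝ) ^ k') := by
            have h2 : ((r - j).choose k : ℝ) *
                |((n - r - j).choose k : ℝ) - ((n - r).choose k : ℝ)|
                ≤ ((r ^ r : ℕ) : ℝ) * ((j : ℝ) * (n : ℝ) ^ k') :=
              mul_le_mul hC1 hdiff (abs_nonneg _) (by positivity)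
            linarith [htail]
        _ ≤ K * (n : ℝ) ^ k' := by
            have hjr : (j : ℝ) ≤ (r : ℝ) := by exact_mod_cast (by omega : j ≤ r)
            have hpw : (0 : ℝ) ≤ (n : ℝ) ^ k' := by positivity
            have hKexp : K = ((r ^ r : ℕ) : ℝ) * (r : ℝ) +
                (r : ℝ) * ((r ^ r * r ^ r : ℕ) : ℝ) := by
              rw [hKdef]; push_cast; ring
            rw [hKexp]
            have hrr : (0 : ℝ) ≤ ((r ^ r : ℕ) : ℝ) := by positivity
            have haux : ((r ^ r : ℕ) : ℝ) * ((j : ℝ) * (n : ℝ) ^ k')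
                ≤ ((r ^ r : ℕ) : ℝ) * ((r : ℝ) * (n : ℝ) ^ k') :=
              mul_le_mul_of_nonneg_left (mul_le_mul_of_nonneg_right hjr hpw) hrr
            nlinarith [haux]
    -- denominator lower bound
    have hden : ((r.choose s : ℝ)) * (((n : ℝ) / 2) ^ k / (k.factorial : ℝ))
        ≤ (r.choose s : ℝ) * ((n - r).choose k : ℝ) := by
      apply mul_le_mul_of_nonneg_left _ (le_of_lt hCspos)
      have h1 : (((n - r) + 1 - k : ℕ) ^ k : ℝ) / (k.factorial : ℝ) ≤ ((n - r).choose k : ℝ) :=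
        Nat.pow_le_choose k (n - r)
      have hcast : (((n - r) + 1 - k : ℕ) : ℝ) = (n : ℝ) - r + 1 - k := by
        have h3 : (n - r) + 1 - k = n + 1 - (r + k) := by omega
        rw [h3]
        push_cast [Nat.cast_sub (by omega : r + k ≤ n + 1)]
        ring
      have hhalf : (n : ℝ) / 2 ≤ (((n - r) + 1 - k : ℕ) : ℝ) := by
        rw [hcast]
        have hkr : (k : ℝ) ≤ (r : ℝ) := by exact_mod_cast (by omega : k ≤ r)
        have hrn : 4 * (r : ℝ) + 4 ≤ (n : ℝ) := by exact_mod_cast hn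
        linarith
      have h2 : ((n : ℝ) / 2) ^ k / (k.factorial : ℝ)
          ≤ (((n - r) + 1 - k : ℕ) ^ k : ℝ) / (k.factorial : ℝ) := by
        gcongr
      linarith
    have hdenpos : (0 : ℝ) < (r.choose s : ℝ) * ((n - r).choose k : ℝ) := by
      apply mul_pos hCspos
      exact_mod_cast Nat.choose_pos (by omega : k ≤ n - r)
    -- assemble
    have heq : (johnsonEigenvalue n r s j : ℝ) /
          ((r.choose s : ℝ) * ((n - r).choose (r - s) : ℝ)) -
        ((r - j).choose (s - j) : ℝ) / (r.choose s : ℝ)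
        = ((johnsonEigenvalue n r s j : ℝ) -
            ((r - j).choose k : ℝ) * ((n - r).choose k : ℝ)) /
          ((r.choose s : ℝ) * ((n - r).choose k : ℝ)) := by
      rw [hsymm]
      have halg : ∀ A x y c : ℝ, x ≠ 0 → y ≠ 0 →
          A / (x * y) - c / x = (A - c * y) / (x * y) := by
        intro A x y c hx hy
        field_simp
      exact halg _ _ _ _ (ne_of_gt hCspos)
        (ne_of_gt (by exact_mod_cast Nat.choose_pos (by omega : k ≤ n - r)))
    rw [heq, abs_div, abs_of_pos hdenpos]
    have step1 : |(johnsonEigenvalue n r s j : ℝ) -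
            ((r - j).choose k : ℝ) * ((n - r).choose k : ℝ)| /
          ((r.choose s : ℝ) * ((n - r).choose k : ℝ))
        ≤ (K * (n : ℝ) ^ k') / ((r.choose s : ℝ) * (((n : ℝ) / 2) ^ k / (k.factorial : ℝ))) := by
      apply div_le_div₀ (by positivity) hnum _ hden
      have : (0 : ℝ) < ((n : ℝ) / 2) ^ k / (k.factorial : ℝ) := by positivity
      exact mul_pos hCspos this
    have step2 : (K * (n : ℝ) ^ k') /
        ((r.choose s : ℝ) * (((n : ℝ) / 2) ^ k / (k.factorial : ℝ))) = C / n := by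
      have hnk : (n : ℝ) ^ k = (n : ℝ) ^ k' * n := by
        rw [hk', pow_succ]
      have hfac : (0 : ℝ) < (k.factorial : ℝ) := by exact_mod_cast Nat.factorial_pos k
      rw [hCdef]
      rw [div_pow, hnk]
      field_simp
    rw [step2] at step1
    exact step1
  constructor
  · exact ⟨C, hCpos, n₀, main⟩
  · have h0 : Tendsto (fun n : ℕ => (johnsonEigenvalue n r s j : ℝ) /
          ((r.choose s : ℝ) * ((n - r).choose (r - s) : ℝ)) -
        ((r - j).choose (s - j) : ℝ) / (r.choose s : ℝ)) atTop (nhds 0) := by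
      apply squeeze_zero_norm' _ (tendsto_const_div_atTop_nhds_zero_nat C)
      filter_upwards [eventually_ge_atTop n₀] with n hn
      exact main n hn
    have := h0.add_const (((r - j).choose (s - j) : ℝ) / (r.choose s : ℝ))
    simpa using this
end

section
/- Let 0 ≤ s < r be fixed integers and let j ∈ {s+1,…,r}. Define λ_j(n) = Σ_{ℓ=max{0,j−s}}^{min{j,r−s}} (−1)^ℓ·C(j,ℓ)·C(r−j, r−s−ℓ)·C(n−r−j, r−s−ℓ) and N1(n) = C(r,s)·C(n−r,r−s). Then n^{j−s}·|λ_j(n)|/N1(n) → C(j,s)·(r−s)! / (C(r,s)·(r−j)!) as n → ∞. -/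
open Filter

private lemma aux_sub_div (c : ℕ) :
    Tendsto (fun n : ℕ => (((n - c : ℕ) : ℝ)) / n) atTop (nhds 1) := by
  have h : Tendsto (fun n : ℕ => 1 - (c : ℝ) / n) atTop (nhds 1) := by
    have := (tendsto_const_div_atTop_nhds_zero_nat (c : ℝ)).const_sub 1
    simpa using this
  refine h.congr' ?_
  filter_upwards [eventually_ge_atTop (c + 1)] with n hn
  have hc : c ≤ n := by omega
  have hn0 : (n : ℝ) ≠ 0 := Nat.cast_ne_zero.mpr (by omega)
  rw [Nat.cast_sub hc]
  field_simp

private lemma aux_choose_div_pow (c k : ℕ) :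
    Tendsto (fun n : ℕ => (((n - c).choose k : ℕ) : ℝ) / (n : ℝ) ^ k) atTop
      (nhds (1 / (k.factorial : ℝ))) := by
  have hprod : Tendsto (fun n : ℕ => ∏ i ∈ Finset.range k, (((n - (c + i) : ℕ) : ℝ)) / n)
      atTop (nhds (∏ _i ∈ Finset.range k, (1 : ℝ))) := by
    apply tendsto_finset_prod
    intro i _
    exact aux_sub_div (c + i)
  simp only [Finset.prod_const_one] at hprod
  have h2 : Tendsto (fun n : ℕ =>
      (∏ i ∈ Finset.range k, (((n - (c + i) : ℕ) : ℝ)) / n) / (k.factorial : ℝ))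
      atTop (nhds (1 / (k.factorial : ℝ))) := hprod.div_const _
  refine h2.congr' ?_
  filter_upwards [eventually_ge_atTop (c + k + 1)] with n hn
  have hn0 : (n : ℝ) ≠ 0 := Nat.cast_ne_zero.mpr (by omega)
  have hdesc : (∏ i ∈ Finset.range k, (n - (c + i))) = k.factorial * (n - c).choose k := by
    rw [← Nat.descFactorial_eq_factorial_mul_choose, Nat.descFactorial_eq_prod_range]
    exact Finset.prod_congr rfl (fun i _ => by omega)
  have hcast : (((n - c).choose k : ℕ) : ℝ) * (k.factorial : ℝ)
      = ∏ i ∈ Finset.range k, (((n - (c + i) : ℕ)) : ℝ) := by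
    rw [← Nat.cast_prod, hdesc]; push_cast; ring
  rw [Finset.prod_div_distrib, Finset.prod_const]
  rw [div_div, ← hcast]
  have hk0 : (k.factorial : ℝ) ≠ 0 := by positivity
  field_simp
  rw [Finset.card_range]

private lemma aux_inv_pow_zero (m : ℕ) (hm : 1 ≤ m) :
    Tendsto (fun n : ℕ => 1 / (n : ℝ) ^ m) atTop (nhds 0) := by
  have : Tendsto (fun n : ℕ => ((n : ℝ) ^ m)⁻¹) atTop (nhds 0) := by
    apply Tendsto.inv_tendsto_atTop
    exact (tendsto_pow_atTop (by omega : m ≠ 0)).comp tendsto_natCast_atTop_atTop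
  simpa [one_div] using this

private lemma aux_num (r s j : ℕ) (hs : s < r) (hj1 : s + 1 ≤ j) (hjr : j ≤ r) :
    Tendsto (fun n : ℕ => (johnsonEigenvalue n r s j : ℝ) / (n : ℝ) ^ (r - j)) atTop
      (nhds ((-1) ^ (j - s) * (j.choose s : ℝ) / ((r - j).factorial : ℝ))) := by
  have hmem : j - s ∈ Finset.Icc (j - s) (min j (r - s)) := by
    simp only [Finset.mem_Icc]
    constructor
    · exact le_refl _
    · omega
  set L : ℕ → ℝ := fun ℓ =>
    if ℓ = j - s then (-1) ^ (j - s) * (j.choose s : ℝ) / ((r - j).factorial : ℝ) else 0 with hL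
  have hsum : ∑ ℓ ∈ Finset.Icc (j - s) (min j (r - s)), L ℓ
      = (-1) ^ (j - s) * (j.choose s : ℝ) / ((r - j).factorial : ℝ) := by
    rw [Finset.sum_eq_single_of_mem (j - s) hmem]
    · simp [hL]
    · intro b _ hb; simp [hL, hb]
  have hterm : ∀ ℓ ∈ Finset.Icc (j - s) (min j (r - s)),
      Tendsto (fun n : ℕ => ((-1 : ℝ)) ^ ℓ * (j.choose ℓ : ℝ) * ((r - j).choose (r - s - ℓ) : ℝ) *
        (((n - r - j).choose (r - s - ℓ) : ℕ) : ℝ) / (n : ℝ) ^ (r - j)) atTop (nhds (L ℓ)) := by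
    intro ℓ hℓ
    simp only [Finset.mem_Icc] at hℓ
    obtain ⟨h1, h2⟩ := hℓ
    have hexp : (r - s - ℓ) + (ℓ - (j - s)) = r - j := by omega
    have hchoose : Tendsto (fun n : ℕ =>
        (((n - (r + j)).choose (r - s - ℓ) : ℕ) : ℝ) / (n : ℝ) ^ (r - s - ℓ)) atTop
        (nhds (1 / ((r - s - ℓ).factorial : ℝ))) := aux_choose_div_pow (r + j) (r - s - ℓ)
    have hcongr : ∀ n : ℕ, ((-1 : ℝ)) ^ ℓ * (j.choose ℓ : ℝ) * ((r - j).choose (r - s - ℓ) : ℝ) *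
        (((n - r - j).choose (r - s - ℓ) : ℕ) : ℝ) / (n : ℝ) ^ (r - j)
        = ((-1 : ℝ)) ^ ℓ * (j.choose ℓ : ℝ) * ((r - j).choose (r - s - ℓ) : ℝ) *
          ((((n - (r + j)).choose (r - s - ℓ) : ℕ) : ℝ) / (n : ℝ) ^ (r - s - ℓ)
            * (1 / (n : ℝ) ^ (ℓ - (j - s)))) := by
      intro n
      have : n - r - j = n - (r + j) := by omega
      rw [this, ← hexp, pow_add]
      ring
    by_cases hcase : ℓ = j - s
    · subst hcase
      have hrs : r - s - (j - s) = r - j := by omega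
      have : Tendsto (fun n : ℕ =>
          ((-1 : ℝ)) ^ (j - s) * (j.choose (j - s) : ℝ) * ((r - j).choose (r - s - (j - s)) : ℝ) *
            ((((n - (r + j)).choose (r - s - (j - s)) : ℕ) : ℝ) / (n : ℝ) ^ (r - s - (j - s))
              * (1 / (n : ℝ) ^ ((j - s) - (j - s))))) atTop
          (nhds (((-1 : ℝ)) ^ (j - s) * (j.choose (j - s) : ℝ) *
            ((r - j).choose (r - s - (j - s)) : ℝ) * (1 / ((r - s - (j - s)).factorial : ℝ) * 1))) := by
        apply Tendsto.const_mul
        apply Tendsto.mul (aux_choose_div_pow _ _)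
        simp [Nat.sub_self]
      refine (this.congr (fun n => (hcongr n).symm)).congr' ?_ |>.mono_right ?_
      · exact Eventually.of_forall (fun n => rfl)
      · apply le_of_eq
        congr 1
        have hjs : j.choose (j - s) = j.choose s := by
          rw [← Nat.choose_symm (by omega : s ≤ j)]
        rw [hrs, hjs, Nat.choose_self]
        simp [hL]
        ring
    · have hgap : 1 ≤ ℓ - (j - s) := by omega
      have : Tendsto (fun n : ℕ =>
          ((-1 : ℝ)) ^ ℓ * (j.choose ℓ : ℝ) * ((r - j).choose (r - s - ℓ) : ℝ) *
            ((((n - (r + j)).choose (r - s - ℓ) : ℕ) : ℝ) / (n : ℝ) ^ (r - s - ℓ)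
              * (1 / (n : ℝ) ^ (ℓ - (j - s))))) atTop
          (nhds (((-1 : ℝ)) ^ ℓ * (j.choose ℓ : ℝ) * ((r - j).choose (r - s - ℓ) : ℝ) *
            (1 / ((r - s - ℓ).factorial : ℝ) * 0))) := by
        apply Tendsto.const_mul
        exact Tendsto.mul (aux_choose_div_pow _ _) (aux_inv_pow_zero _ hgap)
      refine (this.congr (fun n => (hcongr n).symm)).mono_right (le_of_eq ?_)
      simp [hL, hcase]
  have := tendsto_finset_sum _ hterm
  rw [hsum] at this
  refine this.congr (fun n => ?_)
  unfold johnsonEigenvalue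
  push_cast
  rw [Finset.sum_div]

/-- For fixed `0 ≤ s < r` and `j ∈ {s+1,…,r}`,
`n^(j−s)·|λ_j(n)|/N1(n) → C(j,s)·(r−s)!/(C(r,s)·(r−j)!)` as `n → ∞`. -/
theorem stmt_14 (r s j : ℕ) (hs : s < r) (hj1 : s + 1 ≤ j) (hjr : j ≤ r) :
    Tendsto (fun n : ℕ =>
        (n : ℝ) ^ (j - s) * |(johnsonEigenvalue n r s j : ℝ)| /
          ((r.choose s : ℝ) * ((n - r).choose (r - s) : ℝ)))
      atTop
      (nhds ((j.choose s : ℝ) * ((r - s).factorial : ℝ) /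
        ((r.choose s : ℝ) * ((r - j).factorial : ℝ)))) := by
  have hnum : Tendsto (fun n : ℕ => |(johnsonEigenvalue n r s j : ℝ) / (n : ℝ) ^ (r - j)|)
      atTop (nhds ((j.choose s : ℝ) / ((r - j).factorial : ℝ))) := by
    have h := (aux_num r s j hs hj1 hjr).abs
    have habs : |(-1 : ℝ) ^ (j - s) * (j.choose s : ℝ) / ((r - j).factorial : ℝ)|
        = (j.choose s : ℝ) / ((r - j).factorial : ℝ) := by
      rw [abs_div, abs_mul, abs_pow, abs_neg, abs_one, one_pow, one_mul,
        abs_of_nonneg (by positivity : (0:ℝ) ≤ (j.choose s : ℝ)),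
        abs_of_nonneg (by positivity : (0:ℝ) ≤ ((r - j).factorial : ℝ))]
    rwa [habs] at h
  have hden : Tendsto (fun n : ℕ =>
      (r.choose s : ℝ) * ((((n - r).choose (r - s) : ℕ) : ℝ) / (n : ℝ) ^ (r - s))) atTop
      (nhds ((r.choose s : ℝ) * (1 / ((r - s).factorial : ℝ)))) :=
    (aux_choose_div_pow r (r - s)).const_mul _
  have hden0 : (r.choose s : ℝ) * (1 / ((r - s).factorial : ℝ)) ≠ 0 := by
    have : 0 < r.choose s := Nat.choose_pos (le_of_lt hs)
    positivity
  have hquot := hnum.div hden hden0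
  have hfinal : ((j.choose s : ℝ) / ((r - j).factorial : ℝ)) /
      ((r.choose s : ℝ) * (1 / ((r - s).factorial : ℝ)))
      = (j.choose s : ℝ) * ((r - s).factorial : ℝ) /
        ((r.choose s : ℝ) * ((r - j).factorial : ℝ)) := by
    have h1 : (0:ℝ) < r.choose s := by exact_mod_cast Nat.choose_pos (le_of_lt hs)
    have h2 : (0:ℝ) < ((r - j).factorial : ℝ) := by positivity
    have h3 : (0:ℝ) < ((r - s).factorial : ℝ) := by positivity
    field_simp
  rw [hfinal] at hquot
  refine hquot.congr' ?_
  filter_upwards [eventually_ge_atTop 1] with n hn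
  simp only [Pi.div_apply]
  have hn0 : (0:ℝ) < (n : ℝ) := by exact_mod_cast hn
  have hpowrj : (0:ℝ) < (n : ℝ) ^ (r - j) := by positivity
  have hpowrs : (0:ℝ) < (n : ℝ) ^ (r - s) := by positivity
  have hpowjs : (n : ℝ) ^ (j - s) * (n : ℝ) ^ (r - j) = (n : ℝ) ^ (r - s) := by
    rw [← pow_add]
    congr 1
    omega
  rw [abs_div, abs_of_nonneg hpowrj.le]
  by_cases hB : (((n - r).choose (r - s) : ℕ) : ℝ) = 0
  · simp [hB]
  · have hA : (r.choose s : ℝ) ≠ 0 := by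
      have : 0 < r.choose s := Nat.choose_pos (le_of_lt hs)
      positivity
    field_simp
    rw [← hpowjs]
    ring
end

section
/- Let 1 ≤ s < r < n be integers with n ≥ 2r + 1. Define λ_0 = C(r,r−s)·C(n−r,r−s) and λ_1 = C(r−1,r−s)·C(n−r−1,r−s) − C(r−1,r−s−1)·C(n−r−1,r−s−1). Then λ_1/λ_0 < s/r. -/
/-- For `1 ≤ s < r < n` with `n ≥ 2r+1`: with `λ_0 = C(r,r−s)·C(n−r,r−s)` and
`λ_1 = C(r−1,r−s)·C(n−r−1,r−s) − C(r−1,r−s−1)·C(n−r−1,r−s−1)`, one has `λ_1/λ_0 < s/r`. -/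
theorem stmt_15 (n r s : ℕ) (hs1 : 1 ≤ s) (hs : s < r) (hr : r < n) (hn : 2 * r + 1 ≤ n) :
    (((r - 1).choose (r - s) : ℝ) * ((n - r - 1).choose (r - s) : ℝ) -
        ((r - 1).choose (r - s - 1) : ℝ) * ((n - r - 1).choose (r - s - 1) : ℝ)) /
      ((r.choose (r - s) : ℝ) * ((n - r).choose (r - s) : ℝ)) <
    (s : ℝ) / (r : ℝ) := by
  set k := r - s with hk
  have hid : (r - 1).choose k * r = r.choose k * s := by
    have h := Nat.choose_mul_succ_eq (r - 1) k
    have hr' : r - 1 + 1 = r := by omega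
    rw [hr'] at h
    rw [h]
    congr 1
    omega
  have h2 : (n - r - 1).choose k ≤ (n - r).choose k := Nat.choose_le_choose k (by omega)
  have h3 : 1 ≤ (r - 1).choose (k - 1) := Nat.choose_pos (by omega)
  have h4 : 1 ≤ (n - r - 1).choose (k - 1) := Nat.choose_pos (by omega)
  have h5 : 0 < r.choose k := Nat.choose_pos (by omega)
  have h6 : 0 < (n - r).choose k := Nat.choose_pos (by omega)
  have h5' : (0:ℝ) < r.choose k := by exact_mod_cast h5
  have h6' : (0:ℝ) < (n - r).choose k := by exact_mod_cast h6
  have hrR : (0:ℝ) < r := by exact_mod_cast Nat.pos_of_ne_zero (by omega)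
  have hsR : (0:ℝ) < s := by exact_mod_cast hs1
  have hid' : ((r - 1).choose k : ℝ) * r = (r.choose k : ℝ) * s := by exact_mod_cast hid
  have h2' : ((n - r - 1).choose k : ℝ) ≤ ((n - r).choose k : ℝ) := by exact_mod_cast h2
  have h3' : (1:ℝ) ≤ ((r - 1).choose (k - 1) : ℝ) := by exact_mod_cast h3
  have h4' : (1:ℝ) ≤ ((n - r - 1).choose (k - 1) : ℝ) := by exact_mod_cast h4
  rw [div_lt_div_iff₀ (by positivity) hrR]
  nlinarith [mul_le_mul_of_nonneg_left h2' (by positivity : (0:ℝ) ≤ (r.choose k : ℝ) * s),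
    mul_le_mul h3' h4' (by positivity) (by positivity),
    mul_pos h5' h6']
end

section
/- Let 0 ≤ s < r be fixed integers. Define λ_j(n) = Σ_{ℓ=max{0,j−s}}^{min{j,r−s}} (−1)^ℓ·C(j,ℓ)·C(r−j, r−s−ℓ)·C(n−r−j, r−s−ℓ) and m_j(n) = C(n,j) − C(n,j−1) (with C(n,−1) = 0). Then there exist a constant C > 0 and n0 such that for all n ≥ n0 one has λ_s(n) > 0 and, for every integer t ≥ 2, Σ_{j=s+1}^{r} m_j(n)·|λ_j(n)|^t ≤ (C/n) · m_s(n)·λ_s(n)^t. -/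
open Filter

/-- The multiplicity `m_j = C(n,j) − C(n,j−1)`, with `C(n,−1) = 0`. -/
def johnsonMultiplicity (n j : ℕ) : ℤ :=
  (n.choose j : ℤ) - (if j = 0 then 0 else (n.choose (j - 1) : ℤ))

/-- single-term bound -/
lemma jterm_abs_le (n r s j ℓ : ℕ) (hjr : j ≤ r) (hℓ : ℓ ≤ j) (hn : 1 ≤ n) :
    |((-1 : ℝ) ^ ℓ * (j.choose ℓ : ℝ) * ((r - j).choose (r - s - ℓ) : ℝ) *
      ((n - r - j).choose (r - s - ℓ) : ℝ))| ≤
      (((r+1)^(r+1) : ℕ) : ℝ)^2 * (n:ℝ)^(r - s - ℓ) := by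
  have habs : |((-1 : ℝ) ^ ℓ * (j.choose ℓ : ℝ) * ((r - j).choose (r - s - ℓ) : ℝ) *
      ((n - r - j).choose (r - s - ℓ) : ℝ))| =
      (j.choose ℓ : ℝ) * ((r - j).choose (r - s - ℓ) : ℝ) * ((n - r - j).choose (r - s - ℓ) : ℝ) := by
    rw [abs_mul, abs_mul, abs_mul, abs_pow, abs_neg, abs_one, one_pow, one_mul,
      Nat.abs_cast, Nat.abs_cast, Nat.abs_cast]
  rw [habs]
  have h1 : j.choose ℓ ≤ (r+1)^(r+1) :=
    (Nat.choose_le_pow j ℓ).trans ((Nat.pow_le_pow_left (by omega) ℓ).trans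
      (Nat.pow_le_pow_right (by omega) (by omega)))
  have h2 : (r - j).choose (r - s - ℓ) ≤ (r+1)^(r+1) :=
    (Nat.choose_le_pow _ _).trans ((Nat.pow_le_pow_left (by omega) _).trans
      (Nat.pow_le_pow_right (by omega) (by omega)))
  have h3 : (n - r - j).choose (r - s - ℓ) ≤ n ^ (r - s - ℓ) :=
    (Nat.choose_le_pow _ _).trans (Nat.pow_le_pow_left (by omega) _)
  have := Nat.mul_le_mul (Nat.mul_le_mul h1 h2) h3
  calc (j.choose ℓ : ℝ) * ((r - j).choose (r - s - ℓ) : ℝ) * ((n - r - j).choose (r - s - ℓ) : ℝ)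
      = ((j.choose ℓ * (r - j).choose (r - s - ℓ) * (n - r - j).choose (r - s - ℓ) : ℕ) : ℝ) := by
        push_cast; ring
    _ ≤ (((r+1)^(r+1) * (r+1)^(r+1) * n ^ (r - s - ℓ) : ℕ) : ℝ) := by exact_mod_cast this
    _ = (((r+1)^(r+1) : ℕ) : ℝ)^2 * (n:ℝ)^(r - s - ℓ) := by push_cast; ring

/-- general sum bound over `Icc a m` -/
lemma jsum_abs_le (n r s j a m : ℕ) (hjr : j ≤ r) (hm : m ≤ j) (hn : 1 ≤ n) :
    |∑ ℓ ∈ Finset.Icc a m, ((-1 : ℝ) ^ ℓ * (j.choose ℓ : ℝ) * ((r - j).choose (r - s - ℓ) : ℝ) *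
      ((n - r - j).choose (r - s - ℓ) : ℝ))| ≤ (((r+1)^(r+1) : ℕ) : ℝ)^3 * (n:ℝ)^(r - s - a) := by
  refine (Finset.abs_sum_le_sum_abs _ _).trans ?_
  have hterm : ∀ ℓ ∈ Finset.Icc a m,
      |((-1 : ℝ) ^ ℓ * (j.choose ℓ : ℝ) * ((r - j).choose (r - s - ℓ) : ℝ) *
        ((n - r - j).choose (r - s - ℓ) : ℝ))| ≤ (((r+1)^(r+1) : ℕ) : ℝ)^2 * (n:ℝ)^(r - s - a) := by
    intro ℓ hℓ
    rw [Finset.mem_Icc] at hℓ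
    refine (jterm_abs_le n r s j ℓ hjr (by omega) hn).trans ?_
    have h1 : (n:ℝ)^(r - s - ℓ) ≤ (n:ℝ)^(r - s - a) :=
      pow_le_pow_right₀ (by exact_mod_cast hn) (by omega)
    have h2 : (0:ℝ) ≤ (((r+1)^(r+1) : ℕ) : ℝ)^2 := by positivity
    nlinarith
  refine (Finset.sum_le_sum hterm).trans ?_
  rw [Finset.sum_const]
  have hcard : (Finset.Icc a m).card ≤ (r+1)^(r+1) := by
    rw [Nat.card_Icc]
    have : (r:ℕ) + 1 ≤ (r+1)^(r+1) := Nat.le_self_pow (by omega) _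
    omega
  calc (Finset.Icc a m).card • ((((r+1)^(r+1) : ℕ) : ℝ)^2 * (n:ℝ)^(r - s - a))
      = ((Finset.Icc a m).card : ℝ) * ((((r+1)^(r+1) : ℕ) : ℝ)^2 * (n:ℝ)^(r - s - a)) := by
        rw [nsmul_eq_mul]
    _ ≤ (((r+1)^(r+1) : ℕ) : ℝ) * ((((r+1)^(r+1) : ℕ) : ℝ)^2 * (n:ℝ)^(r - s - a)) := by
        apply mul_le_mul_of_nonneg_right (by exact_mod_cast hcard)
        positivity
    _ = (((r+1)^(r+1) : ℕ) : ℝ)^3 * (n:ℝ)^(r - s - a) := by ring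

/-- lower bound on λ_s -/
lemma jeig_s_lower (r s : ℕ) (hs : s < r) (n : ℕ)
    (hn : 2 * (((r+1)^(r+1))^3 * (2^(r+1) * Nat.factorial r)) + 8 * r + 8 ≤ n) :
    (n:ℝ)^(r-s) / (2^(r+1) * Nat.factorial r) ≤ (johnsonEigenvalue n r s s : ℝ) := by
  have hn1 : 1 ≤ n := by omega
  have hXn : ((r+1)^(r+1))^3 * (2^(r+1) * Nat.factorial r) ≤ n := by
    refine le_trans ?_ hn
    nlinarith [Nat.zero_le (((r+1)^(r+1))^3 * (2^(r+1) * Nat.factorial r))]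
  -- cast eigenvalue to a real sum
  have hcast : ((johnsonEigenvalue n r s s : ℤ) : ℝ) =
      ∑ ℓ ∈ Finset.Icc 0 (min s (r - s)),
        ((-1 : ℝ) ^ ℓ * (s.choose ℓ : ℝ) * ((r - s).choose (r - s - ℓ) : ℝ) *
          ((n - r - s).choose (r - s - ℓ) : ℝ)) := by
    unfold johnsonEigenvalue
    rw [Nat.sub_self]
    push_cast; ring
  -- split off the ℓ = 0 term
  have hmem : (0 : ℕ) ∈ Finset.Icc 0 (min s (r - s)) := by simp
  have hsplit : ∑ ℓ ∈ Finset.Icc 0 (min s (r - s)),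
        ((-1 : ℝ) ^ ℓ * (s.choose ℓ : ℝ) * ((r - s).choose (r - s - ℓ) : ℝ) *
          ((n - r - s).choose (r - s - ℓ) : ℝ)) =
      ((n - r - s).choose (r - s) : ℝ) +
      ∑ ℓ ∈ Finset.Icc 1 (min s (r - s)),
        ((-1 : ℝ) ^ ℓ * (s.choose ℓ : ℝ) * ((r - s).choose (r - s - ℓ) : ℝ) *
          ((n - r - s).choose (r - s - ℓ) : ℝ)) := by
    rw [← Finset.add_sum_erase _ _ hmem, Finset.Icc_erase_left, ← Finset.Icc_add_one_left_eq_Ioc]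
    norm_num
  have hE : |∑ ℓ ∈ Finset.Icc 1 (min s (r - s)),
        ((-1 : ℝ) ^ ℓ * (s.choose ℓ : ℝ) * ((r - s).choose (r - s - ℓ) : ℝ) *
          ((n - r - s).choose (r - s - ℓ) : ℝ))| ≤
      (((r+1)^(r+1) : ℕ) : ℝ)^3 * (n:ℝ)^(r - s - 1) :=
    jsum_abs_le n r s s 1 (min s (r-s)) (le_of_lt hs) (by omega) hn1
  -- main term lower bound
  have hM0 := Nat.pow_le_choose (α := ℝ) (r - s) (n - r - s)
  have heq : n - r - s + 1 - (r - s) = n - 2*r + 1 := by omega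
  rw [heq] at hM0
  have hhalfN : n ≤ 2 * (n - 2*r + 1) := by omega
  have hhalf : (n:ℝ)/2 ≤ ((n - 2*r + 1 : ℕ) : ℝ) := by
    have : (n:ℝ) ≤ 2 * ((n - 2*r + 1 : ℕ) : ℝ) := by exact_mod_cast hhalfN
    linarith
  have hpow : ((n:ℝ)/2)^(r-s) ≤ (((n - 2*r + 1 : ℕ) : ℝ))^(r-s) :=
    pow_le_pow_left₀ (by positivity) hhalf _
  have hfacpos : (0:ℝ) < (Nat.factorial (r-s) : ℝ) := by positivity
  have hfacle : ((2:ℝ)^(r-s) * Nat.factorial (r-s)) ≤ 2^r * Nat.factorial r := by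
    have h1 : (2:ℕ)^(r-s) * Nat.factorial (r-s) ≤ 2^r * Nat.factorial r :=
      Nat.mul_le_mul (Nat.pow_le_pow_right (by omega) (by omega)) (Nat.factorial_le (by omega))
    exact_mod_cast h1
  have hM : (n:ℝ)^(r-s) / (2^r * Nat.factorial r) ≤ ((n - r - s).choose (r - s) : ℝ) := by
    have hpown : (0:ℝ) ≤ (n:ℝ)^(r-s) := by positivity
    have h1 : (n:ℝ)^(r-s) / (2^r * Nat.factorial r) ≤
        (n:ℝ)^(r-s) / (2^(r-s) * Nat.factorial (r-s)) :=
      div_le_div_of_nonneg_left hpown (by positivity) hfacle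
    have h2 : (n:ℝ)^(r-s) / (2^(r-s) * Nat.factorial (r-s)) =
        ((n:ℝ)/2)^(r-s) / Nat.factorial (r-s) := by
      rw [div_pow]; ring
    have h3 : ((n:ℝ)/2)^(r-s) / (Nat.factorial (r-s) : ℝ) ≤
        (((n - 2*r + 1 : ℕ) : ℝ))^(r-s) / (Nat.factorial (r-s) : ℝ) := by gcongr
    have hM0' : (((n - 2*r + 1 : ℕ) : ℝ))^(r-s) / (Nat.factorial (r-s) : ℝ) ≤
        ((n - r - s).choose (r - s) : ℝ) := by
      push_cast at hM0 ⊢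
      linarith
    linarith
  have hgap : (((r+1)^(r+1) : ℕ) : ℝ)^3 * (n:ℝ)^(r - s - 1) ≤
      (n:ℝ)^(r-s) / (2^(r+1) * Nat.factorial r) := by
    have hsplitpow : (n:ℝ)^(r-s) = (n:ℝ)^(r-s-1) * n := by
      rw [← pow_succ]; congr 1; omega
    have hb'pos : (0:ℝ) < 2^(r+1) * Nat.factorial r := by positivity
    have hXn' : (((r+1)^(r+1) : ℕ) : ℝ)^3 * (2^(r+1) * Nat.factorial r) ≤ n := by
      exact_mod_cast hXn
    rw [hsplitpow]
    rw [div_eq_mul_inv, mul_assoc]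
    have : (((r+1)^(r+1) : ℕ) : ℝ)^3 ≤ (n:ℝ) * (2^(r+1) * (Nat.factorial r : ℝ))⁻¹ := by
      rw [← div_eq_mul_inv, le_div_iff₀ hb'pos]
      exact hXn'
    calc (((r+1)^(r+1) : ℕ) : ℝ)^3 * (n:ℝ)^(r - s - 1)
        = (n:ℝ)^(r - s - 1) * (((r+1)^(r+1) : ℕ) : ℝ)^3 := by ring
      _ ≤ (n:ℝ)^(r - s - 1) * ((n:ℝ) * (2^(r+1) * (Nat.factorial r : ℝ))⁻¹) := by
          apply mul_le_mul_of_nonneg_left this (by positivity)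
  have h2eq : (n:ℝ)^(r-s)/(2^r * Nat.factorial r) =
      2 * ((n:ℝ)^(r-s)/(2^(r+1) * Nat.factorial r)) := by
    rw [pow_succ]
    have h2pos : (0:ℝ) < 2^r * Nat.factorial r := by positivity
    field_simp
  rw [hcast, hsplit]
  have habs := neg_abs_le (∑ ℓ ∈ Finset.Icc 1 (min s (r - s)),
        ((-1 : ℝ) ^ ℓ * (s.choose ℓ : ℝ) * ((r - s).choose (r - s - ℓ) : ℝ) *
          ((n - r - s).choose (r - s - ℓ) : ℝ)))
  linarith

/-- lower bound on m_s -/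
lemma jmult_lower (r s : ℕ) (hs : s < r) (n : ℕ)
    (hn : 2 * (((r+1)^(r+1))^3 * (2^(r+1) * Nat.factorial r)) + 8 * r + 8 ≤ n) :
    (n:ℝ)^s / (2^(r+1) * Nat.factorial r) ≤ (johnsonMultiplicity n s : ℝ) := by
  have hb'one : (1:ℝ) ≤ 2^(r+1) * Nat.factorial r := by
    have h1 : (1:ℕ) ≤ 2^(r+1) * Nat.factorial r :=
      Nat.one_le_iff_ne_zero.mpr (by positivity)
    exact_mod_cast h1
  rcases Nat.eq_zero_or_pos s with hs0 | hspos
  · subst hs0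
    have : (johnsonMultiplicity n 0 : ℝ) = 1 := by
      simp [johnsonMultiplicity]
    rw [this, pow_zero]
    rw [div_le_one (by linarith)]
    exact hb'one
  · -- s ≥ 1
    have hkey : 2 * n.choose (s-1) ≤ n.choose s := by
      have h := Nat.choose_succ_right_eq n (s-1)
      have hs1 : s - 1 + 1 = s := by omega
      rw [hs1] at h
      have h2 : 2 * n.choose (s-1) * (n - (s-1)) ≤ n.choose s * (n - (s-1)) := by
        calc 2 * n.choose (s-1) * (n - (s-1)) = 2 * (n.choose (s-1) * (n - (s-1))) := by ring
          _ = 2 * (n.choose s * s) := by rw [← h]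
          _ = n.choose s * (2 * s) := by ring
          _ ≤ n.choose s * (n - (s-1)) := Nat.mul_le_mul_left _ (by omega)
      exact Nat.le_of_mul_le_mul_right h2 (by omega)
    have hkeyR : 2 * (n.choose (s-1) : ℝ) ≤ (n.choose s : ℝ) := by exact_mod_cast hkey
    have hcs := Nat.pow_le_choose (α := ℝ) s n
    have hhalfN : n ≤ 2 * (n + 1 - s) := by omega
    have hhalf : (n:ℝ)/2 ≤ ((n + 1 - s : ℕ) : ℝ) := by
      have : (n:ℝ) ≤ 2 * ((n + 1 - s : ℕ) : ℝ) := by exact_mod_cast hhalfN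
      linarith
    have hpow : ((n:ℝ)/2)^s ≤ (((n + 1 - s : ℕ) : ℝ))^s :=
      pow_le_pow_left₀ (by positivity) hhalf _
    have hfacle : ((2:ℝ)^(s+1) * Nat.factorial s) ≤ 2^(r+1) * Nat.factorial r := by
      have h1 : (2:ℕ)^(s+1) * Nat.factorial s ≤ 2^(r+1) * Nat.factorial r :=
        Nat.mul_le_mul (Nat.pow_le_pow_right (by omega) (by omega)) (Nat.factorial_le (by omega))
      exact_mod_cast h1
    have hcs2 : (n:ℝ)^s * 2 / (2^(s+1) * Nat.factorial s) ≤ (n.choose s : ℝ) := by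
      have e1 : (n:ℝ)^s * 2 / (2^(s+1) * Nat.factorial s) = ((n:ℝ)/2)^s / Nat.factorial s := by
        rw [div_pow, pow_succ]
        have : (Nat.factorial s : ℝ) ≠ 0 := by positivity
        field_simp
      rw [e1]
      have h3 : ((n:ℝ)/2)^s / (Nat.factorial s : ℝ) ≤
          (((n + 1 - s : ℕ)):ℝ)^s / (Nat.factorial s : ℝ) := by gcongr
      have hcs' : (((n + 1 - s : ℕ)):ℝ)^s / (Nat.factorial s : ℝ) ≤ (n.choose s : ℝ) := by
        push_cast at hcs ⊢
        linarith
      linarith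
    -- combine: m_s = C(n,s) - C(n,s-1) ≥ C(n,s)/2 ≥ n^s / b'
    have hmult : (johnsonMultiplicity n s : ℝ) = (n.choose s : ℝ) - (n.choose (s-1) : ℝ) := by
      unfold johnsonMultiplicity
      rw [if_neg (by omega)]
      push_cast
      ring
    rw [hmult]
    have hfinal : (n:ℝ)^s / (2^(r+1) * Nat.factorial r) ≤ (n.choose s : ℝ) / 2 := by
      have h1 : (n:ℝ)^s * 2 / (2^(r+1) * Nat.factorial r) ≤
          (n:ℝ)^s * 2 / (2^(s+1) * Nat.factorial s) := by
        apply div_le_div_of_nonneg_left (by positivity) (by positivity) hfacle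
      have h2 := h1.trans hcs2
      have e2 : (n:ℝ)^s * 2/(2^(r+1) * Nat.factorial r) =
          2 * ((n:ℝ)^s/(2^(r+1) * Nat.factorial r)) := by ring
      linarith
    linarith

/-- abs bound on λ_j for j > s -/
lemma jeig_abs_le (n r s j : ℕ) (hsj : s < j) (hjr : j ≤ r) (hn : 1 ≤ n) :
    |(johnsonEigenvalue n r s j : ℝ)| ≤ (((r+1)^(r+1) : ℕ) : ℝ)^3 * (n:ℝ)^(r - j) := by
  have hcast : ((johnsonEigenvalue n r s j : ℤ) : ℝ) =
      ∑ ℓ ∈ Finset.Icc (j - s) (min j (r - s)),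
        ((-1 : ℝ) ^ ℓ * (j.choose ℓ : ℝ) * ((r - j).choose (r - s - ℓ) : ℝ) *
          ((n - r - j).choose (r - s - ℓ) : ℝ)) := by
    unfold johnsonEigenvalue; push_cast; ring
  rw [hcast]
  have h := jsum_abs_le n r s j (j - s) (min j (r - s)) hjr (by omega) hn
  have heq : r - s - (j - s) = r - j := by omega
  rwa [heq] at h

/-- upper bound on m_j -/
lemma jmult_upper (n j : ℕ) : (johnsonMultiplicity n j : ℝ) ≤ (n:ℝ)^j := by
  have hc : ((n.choose j : ℕ) : ℝ) ≤ (n:ℝ)^j := by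
    exact_mod_cast Nat.choose_le_pow n j
  unfold johnsonMultiplicity
  split_ifs with h
  · push_cast; linarith
  · push_cast
    have h0 : (0:ℝ) ≤ ((n.choose (j-1) : ℕ) : ℝ) := by positivity
    linarith

/-- the key abstract inequality -/
lemma key_ineq (K B : ℝ) (hK : 1 ≤ K) (hB : 1 ≤ B) (s j r u n : ℕ) (hsj : s < j) (hjr : j ≤ r)
    (hn : K * B ≤ (n:ℝ)) :
    (n:ℝ)^j * (K * (n:ℝ)^(r-j))^(u+2) ≤
      (K^2 * B^3 / n) * ((n:ℝ)^s / B * ((n:ℝ)^(r-s) / B)^(u+2)) := by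
  obtain ⟨c, rfl⟩ : ∃ c, r = j + c := ⟨r - j, by omega⟩
  obtain ⟨a, rfl⟩ : ∃ a, j = s + (a + 1) := ⟨j - s - 1, by omega⟩
  have e1 : s + (a+1) + c - (s + (a+1)) = c := by omega
  have e2 : s + (a+1) + c - s = a + 1 + c := by omega
  rw [e1, e2]
  have hKB1 : (1:ℝ) ≤ K * B := by nlinarith
  have hn1 : (1:ℝ) ≤ (n:ℝ) := le_trans hKB1 hn
  have hn0 : (0:ℝ) < (n:ℝ) := by linarith
  have hB0 : (0:ℝ) < B := by linarith
  have hK0 : (0:ℝ) < K := by linarith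
  have hRHS : (K^2 * B^3 / n) * ((n:ℝ)^s / B * ((n:ℝ)^(a+1+c) / B)^(u+2)) =
      K^2 * B^3 * (n:ℝ)^(s + (a+1+c)*(u+2)) / ((n:ℝ) * B^(u+3)) := by
    rw [div_pow, ← pow_mul, pow_add]
    field_simp
    ring
  have hLHS : (n:ℝ)^(s+(a+1)) * (K * (n:ℝ)^c)^(u+2) =
      K^(u+2) * (n:ℝ)^(s + (a+1) + c*(u+2)) := by
    rw [mul_pow, ← pow_mul, pow_add, pow_add]
    ring
  rw [hRHS, hLHS, le_div_iff₀ (by positivity)]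
  have hE : s + (a+1+c)*(u+2) = (s + (a+1) + c*(u+2) + 1) + (a*u + a + u) := by ring
  rw [hE]
  have hstep : K^u * B^u ≤ (n:ℝ)^(a*u + a + u) := by
    calc K^u * B^u = (K*B)^u := (mul_pow K B u).symm
      _ ≤ (n:ℝ)^u := pow_le_pow_left₀ (by positivity) hn u
      _ ≤ (n:ℝ)^(a*u + a + u) := pow_le_pow_right₀ hn1 (Nat.le_add_left u _)
  calc K^(u+2) * (n:ℝ)^(s+(a+1)+c*(u+2)) * ((n:ℝ) * B^(u+3))
      = (K^2*B^3) * (K^u * B^u) * ((n:ℝ)^(s+(a+1)+c*(u+2)) * n) := by ring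
    _ ≤ (K^2*B^3) * (n:ℝ)^(a*u+a+u) * ((n:ℝ)^(s+(a+1)+c*(u+2)) * n) := by
        apply mul_le_mul_of_nonneg_right
          (mul_le_mul_of_nonneg_left hstep (by positivity)) (by positivity)
    _ = K^2*B^3 * (n:ℝ)^((s+(a+1)+c*(u+2)+1) + (a*u+a+u)) := by
        rw [pow_add, pow_succ]; ring

/-- For fixed `0 ≤ s < r` there is `C > 0` such that for all large `n`:
`λ_s(n) > 0` and, for every `t ≥ 2`,
`Σ_{j=s+1}^r m_j·|λ_j|^t ≤ (C/n)·m_s·λ_s^t`. -/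
theorem stmt_16 (r s : ℕ) (hs : s < r) :
    ∃ C > (0 : ℝ), ∃ n₀ : ℕ, ∀ n ≥ n₀,
      0 < johnsonEigenvalue n r s s ∧
      ∀ t : ℕ, 2 ≤ t →
        ∑ j ∈ Finset.Icc (s + 1) r,
            (johnsonMultiplicity n j : ℝ) * |(johnsonEigenvalue n r s j : ℝ)| ^ t ≤
          (C / n) * (johnsonMultiplicity n s : ℝ) * (johnsonEigenvalue n r s s : ℝ) ^ t := by
  set K : ℝ := (((r+1)^(r+1) : ℕ) : ℝ)^3 with hKdef
  set B : ℝ := 2^(r+1) * Nat.factorial r with hBdef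
  have hK1 : (1:ℝ) ≤ K := by
    have : (1:ℕ) ≤ ((r+1)^(r+1))^3 := Nat.one_le_iff_ne_zero.mpr (by positivity)
    rw [hKdef]
    push_cast
    exact_mod_cast Nat.one_le_cast.mpr this
  have hB1 : (1:ℝ) ≤ B := by
    have h1 : (1:ℕ) ≤ 2^(r+1) * Nat.factorial r := Nat.one_le_iff_ne_zero.mpr (by positivity)
    rw [hBdef]
    exact_mod_cast h1
  have hK0 : (0:ℝ) < K := by linarith
  have hB0 : (0:ℝ) < B := by linarith
  refine ⟨(r+1) * (K^2 * B^3), by positivity,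
    2 * (((r+1)^(r+1))^3 * (2^(r+1) * Nat.factorial r)) + 8 * r + 8, ?_⟩
  intro n hn
  have hn1 : 1 ≤ n := by omega
  have hn1R : (1:ℝ) ≤ (n:ℝ) := by exact_mod_cast hn1
  have hn0R : (0:ℝ) < (n:ℝ) := by linarith
  have hXn : ((r+1)^(r+1))^3 * (2^(r+1) * Nat.factorial r) ≤ n := by
    refine le_trans ?_ hn
    nlinarith [Nat.zero_le (((r+1)^(r+1))^3 * (2^(r+1) * Nat.factorial r))]
  have hKBn : K * B ≤ (n:ℝ) := by
    rw [hKdef, hBdef]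
    push_cast
    exact_mod_cast Nat.cast_le.mpr hXn
  have hLs := jeig_s_lower r s hs n hn
  have hms := jmult_lower r s hs n hn
  have hLpos : (0:ℝ) < (johnsonEigenvalue n r s s : ℝ) := by
    refine lt_of_lt_of_le ?_ hLs
    positivity
  constructor
  · exact_mod_cast hLpos
  · intro t ht
    obtain ⟨u, rfl⟩ : ∃ u, t = u + 2 := ⟨t - 2, by omega⟩
    have hterm : ∀ j ∈ Finset.Icc (s+1) r,
        (johnsonMultiplicity n j : ℝ) * |(johnsonEigenvalue n r s j : ℝ)| ^ (u+2) ≤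
        (K^2*B^3/n) * ((johnsonMultiplicity n s : ℝ) * (johnsonEigenvalue n r s s : ℝ)^(u+2)) := by
      intro j hj
      rw [Finset.mem_Icc] at hj
      have hsj : s < j := by omega
      have hjr : j ≤ r := hj.2
      have h1 : (johnsonMultiplicity n j : ℝ) * |(johnsonEigenvalue n r s j : ℝ)| ^ (u+2) ≤
          (n:ℝ)^j * (K * (n:ℝ)^(r-j))^(u+2) := by
        apply mul_le_mul (jmult_upper n j)
          (pow_le_pow_left₀ (abs_nonneg _) (jeig_abs_le n r s j hsj hjr hn1) (u+2))
          (by positivity) (by positivity)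
      have h2 := key_ineq K B hK1 hB1 s j r u n hsj hjr hKBn
      have h3 : (K^2*B^3/n) * ((n:ℝ)^s / B * ((n:ℝ)^(r-s) / B)^(u+2)) ≤
          (K^2*B^3/n) * ((johnsonMultiplicity n s : ℝ) * (johnsonEigenvalue n r s s : ℝ)^(u+2)) := by
        apply mul_le_mul_of_nonneg_left _ (by positivity)
        apply mul_le_mul
        · rw [hBdef]; exact hms
        · apply pow_le_pow_left₀ (by positivity)
          rw [hBdef]; exact hLs
        · positivity
        · have : (0:ℝ) < (johnsonMultiplicity n s : ℝ) := by
            refine lt_of_lt_of_le ?_ hms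
            positivity
          linarith
      exact h1.trans (h2.trans h3)
    have hsum := Finset.sum_le_card_nsmul _ _ _ hterm
    refine hsum.trans ?_
    have hcard : (Finset.Icc (s+1) r).card ≤ r + 1 := by
      rw [Nat.card_Icc]; omega
    have hXpos : (0:ℝ) ≤ (K^2*B^3/n) *
        ((johnsonMultiplicity n s : ℝ) * (johnsonEigenvalue n r s s : ℝ)^(u+2)) := by
      have hm0 : (0:ℝ) < (johnsonMultiplicity n s : ℝ) :=
        lt_of_lt_of_le (by positivity) hms
      positivity
    calc (Finset.Icc (s+1) r).card •
          ((K^2*B^3/n) * ((johnsonMultiplicity n s : ℝ) * (johnsonEigenvalue n r s s : ℝ)^(u+2)))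
        = ((Finset.Icc (s+1) r).card : ℝ) *
          ((K^2*B^3/n) * ((johnsonMultiplicity n s : ℝ) * (johnsonEigenvalue n r s s : ℝ)^(u+2))) := by
          rw [nsmul_eq_mul]
      _ ≤ ((r:ℝ)+1) *
          ((K^2*B^3/n) * ((johnsonMultiplicity n s : ℝ) * (johnsonEigenvalue n r s s : ℝ)^(u+2))) := by
          apply mul_le_mul_of_nonneg_right _ hXpos
          exact_mod_cast hcard
      _ = ((r+1) * (K^2*B^3) / n) * (johnsonMultiplicity n s : ℝ) *
            (johnsonEigenvalue n r s s : ℝ)^(u+2) := by ring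
end
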